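/- arXiv:2211.10500 — 6 statements merged into one kernel-verified Lean document; each statement's English description precedes it below -/
import Mathlib

section
/- Let φ_1,…,φ_r be symmetric polynomials of the shape φ_j(z) = Σ_{l=1}^k a_{jl} σ_l(z) with respective degrees k_1,…,k_r satisfying 1 ≤ k_1 < k_2 < … < k_r = k. Then for each ε > 0 one has N_k(X;φ) = T_k(X) + O(X^{w(φ)+1+ε}) as X → ∞. -/
open Finset Asymptotics Filter

/-- The elementary symmetric polynomial `σ_l` evaluated at the integer tuple `x`. -/
def esymm (k l : ℕ) (x : Fin k → ℤ) : ℤ :=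
  ∑ s ∈ Finset.powersetCard l (Finset.univ : Finset (Fin k)), ∏ i ∈ s, x i

/-- The number of pairs `(x, y)` of integer `k`-tuples with all entries in `[1, X]`
satisfying the relation `P`. -/
noncomputable def pairCount (k X : ℕ) (P : (Fin k → ℤ) → (Fin k → ℤ) → Prop) : ℕ :=
  Nat.card {p : (Fin k → ℤ) × (Fin k → ℤ) //
    (∀ i, 1 ≤ p.1 i ∧ p.1 i ≤ (X : ℤ)) ∧ (∀ i, 1 ≤ p.2 i ∧ p.2 i ≤ (X : ℤ)) ∧ P p.1 p.2}

/-- `T_k(X)`: the number of pairs `(x, y)` of integer `k`-tuples with entries in `[1, X]`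
for which `y` is a permutation of `x`. -/
noncomputable def permCount (k X : ℕ) : ℕ :=
  pairCount k X (fun x y => ∃ π : Equiv.Perm (Fin k), y = x ∘ π)


open Polynomial

noncomputable def ibox (k X : ℕ) : Finset (Fin k → ℤ) := Fintype.piFinset fun _ => Finset.Icc 1 (X : ℤ)

lemma mem_ibox {k X : ℕ} {x : Fin k → ℤ} :
    x ∈ ibox k X ↔ ∀ i, 1 ≤ x i ∧ x i ≤ (X : ℤ) := by
  unfold ibox
  rw [Fintype.mem_piFinset]
  simp [Finset.mem_Icc]

noncomputable def polyOf {k : ℕ} (x : Fin k → ℤ) : Polynomial ℤ :=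
  ∏ i : Fin k, (Polynomial.X + Polynomial.C (x i))

lemma polyOf_monic {k : ℕ} (x : Fin k → ℤ) : (polyOf x).Monic :=
  monic_prod_of_monic _ _ fun i _ => monic_X_add_C (x i)

lemma polyOf_ne_zero {k : ℕ} (x : Fin k → ℤ) : polyOf x ≠ 0 :=
  (polyOf_monic x).ne_zero

lemma polyOf_natDegree {k : ℕ} (x : Fin k → ℤ) : (polyOf x).natDegree = k := by
  rw [polyOf, natDegree_prod _ _ (fun i _ => X_add_C_ne_zero (x i))]
  simp only [natDegree_X_add_C, Finset.sum_const, smul_eq_mul, mul_one, Finset.card_univ,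
    Fintype.card_fin]

lemma polyOf_coeff {k l : ℕ} (x : Fin k → ℤ) (hl : l ≤ k) :
    (polyOf x).coeff (k - l) = esymm k l x := by
  have h : k - l ≤ #(Finset.univ : Finset (Fin k)) := by simp [Nat.sub_le]
  rw [polyOf, Finset.prod_X_add_C_coeff _ _ h, esymm]
  congr 2
  simp [Nat.sub_sub_self hl]

lemma polyOf_eval {k : ℕ} (x : Fin k → ℤ) (t : ℤ) :
    (polyOf x).eval t = ∏ i : Fin k, (t + x i) := by
  simp [polyOf, eval_prod]

lemma polyOf_eval_self {k : ℕ} (x : Fin k → ℤ) (i : Fin k) :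
    (polyOf x).eval (-(x i)) = 0 := by
  rw [polyOf_eval]
  exact Finset.prod_eq_zero (Finset.mem_univ i) (by ring)

lemma polyOf_comp_perm {k : ℕ} (x : Fin k → ℤ) (π : Equiv.Perm (Fin k)) :
    polyOf (x ∘ π) = polyOf x := by
  rw [polyOf, polyOf]
  exact Equiv.prod_comp π fun i => Polynomial.X + Polynomial.C (x i)

lemma esymm_comp_perm {k l : ℕ} (x : Fin k → ℤ) (π : Equiv.Perm (Fin k)) (hl : l ≤ k) :
    esymm k l (x ∘ π) = esymm k l x := by
  rw [← polyOf_coeff _ hl, ← polyOf_coeff _ hl, polyOf_comp_perm]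

lemma exists_perm_of_polyOf_eq {k : ℕ} {x y : Fin k → ℤ} (h : polyOf x = polyOf y) :
    ∃ π : Equiv.Perm (Fin k), y = x ∘ π := by
  have key : ∀ z : Fin k → ℤ, polyOf z = (Multiset.map (fun a => Polynomial.X - Polynomial.C a)
      ((Finset.univ.val.map fun i => -(z i)))).prod := by
    intro z
    rw [polyOf, Finset.prod_eq_multiset_prod, Multiset.map_map]
    congr 1
    apply Multiset.map_congr rfl
    intro i _
    simp [sub_neg_eq_add]
  have hroots : (Finset.univ.val.map fun i => -(x i)) = (Finset.univ.val.map fun i => -(y i)) := by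
    rw [← Polynomial.roots_multiset_prod_X_sub_C (Finset.univ.val.map fun i => -(x i)),
      ← Polynomial.roots_multiset_prod_X_sub_C (Finset.univ.val.map fun i => -(y i)),
      ← key x, ← key y, h]
  have hperm : (List.ofFn x).Perm (List.ofFn y) := by
    have h0 := congrArg (Multiset.map (fun a : ℤ => -a)) hroots
    simp only [Multiset.map_map] at h0
    have hx' : ((fun a : ℤ => -a) ∘ fun i => -(x i)) = x := funext fun i => by simp
    have hy' : ((fun a : ℤ => -a) ∘ fun i => -(y i)) = y := funext fun i => by simp
    rw [hx', hy', Fin.univ_val_map, Fin.univ_val_map] at h0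
    exact Multiset.coe_eq_coe.mp h0
  -- use sorting
  set σ := Tuple.sort x with hσ
  set τ := Tuple.sort y with hτ
  have h1 : List.ofFn (x ∘ σ) = List.ofFn (y ∘ τ) := by
    exact List.Perm.eq_of_sortedLE (List.sortedLE_ofFn_iff.mpr (Tuple.monotone_sort x))
      (List.sortedLE_ofFn_iff.mpr (Tuple.monotone_sort y)) (((σ.ofFn_comp_perm x).trans hperm).trans
      (τ.ofFn_comp_perm y).symm)
  have h2 : x ∘ σ = y ∘ τ := List.ofFn_injective h1
  refine ⟨τ.symm.trans σ, ?_⟩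
  funext i
  have := congrFun h2 (τ.symm i)
  simpa using this.symm

lemma pointwise_bound (δ : ℝ) (hδ : 0 < δ) (p a : ℕ) (hp : 2 ≤ p) :
    ((a : ℝ) + 1) ≤ (1 + 2 / (δ * Real.log 2)) * (((p : ℝ) ^ a) ^ δ) := by
  set L := δ * Real.log 2 with hL
  have hlog : 0 < Real.log 2 := Real.log_pos (by norm_num)
  have hLpos : 0 < L := mul_pos hδ hlog
  have h2 : ((2:ℝ) ^ a : ℝ) ^ δ = Real.exp ((a : ℝ) * L) := by
    rw [← Real.rpow_natCast (2:ℝ) a, ← Real.rpow_mul (by norm_num),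
      Real.rpow_def_of_pos (by norm_num)]
    ring_nf
    rw [hL]; ring_nf
  have hmono : ((2:ℝ) ^ a : ℝ) ^ δ ≤ ((p:ℝ) ^ a) ^ δ := by
    apply Real.rpow_le_rpow (by positivity)
    · exact pow_le_pow_left₀ (by norm_num) (by exact_mod_cast hp) a
    · exact le_of_lt hδ
  have hexp : (a:ℝ) * L + 1 ≤ Real.exp ((a:ℝ) * L) := Real.add_one_le_exp _
  have hexp1 : (1:ℝ) ≤ Real.exp ((a:ℝ) * L) := by
    rw [← Real.exp_zero]; exact Real.exp_le_exp.mpr (by positivity)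
  have key : ((a : ℝ) + 1) ≤ (1 + 2 / L) * Real.exp ((a:ℝ) * L) := by
    rcases le_or_gt ((a:ℝ) * L) 1 with hcase | hcase
    · have ha : (a : ℝ) * L ≤ 1 := hcase
      have h1L : (a:ℝ) ≤ 1 / L := by rw [le_div_iff₀ hLpos]; exact hcase
      have h2L : (0:ℝ) < 2 / L := by positivity
      have : (2:ℝ)/L = 2 * (1/L) := by ring
      nlinarith [mul_le_mul_of_nonneg_left hexp1 (le_of_lt h2L)]
    · have ha1 : (1:ℝ) ≤ a := by
        by_contra hcon
        push_neg at hcon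
        have : (a:ℝ) = 0 := by
          have := Nat.lt_one_iff.mp (by exact_mod_cast hcon)
          simp [this]
        rw [this, zero_mul] at hcase; linarith
      have h2L : (0:ℝ) < 2 / L := by positivity
      have : (2 / L) * ((a:ℝ) * L) = 2 * a := by field_simp
      nlinarith [mul_le_mul_of_nonneg_left hexp (le_of_lt h2L)]
  calc ((a:ℝ) + 1) ≤ (1 + 2/L) * Real.exp ((a:ℝ) * L) := key
    _ = (1 + 2/L) * (((2:ℝ) ^ a) ^ δ) := by rw [h2]
    _ ≤ (1 + 2/L) * (((p:ℝ) ^ a) ^ δ) := by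
        have h2L : (0:ℝ) < 2 / L := by positivity
        have hC : (1:ℝ) ≤ 1 + 2 / L := by linarith
        exact mul_le_mul_of_nonneg_left hmono (by linarith)

lemma divisor_bound (δ : ℝ) (hδ : 0 < δ) :
    ∃ C : ℝ, 1 ≤ C ∧ ∀ n : ℕ, n ≠ 0 → ((n.divisors.card : ℝ)) ≤ C * (n : ℝ) ^ δ := by
  classical
  set C₀ : ℝ := 1 + 2 / (δ * Real.log 2) with hC₀def
  have hlog : 0 < Real.log 2 := Real.log_pos (by norm_num)
  have hC₀ : (1:ℝ) ≤ C₀ := by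
    have h : 0 < 2 / (δ * Real.log 2) := by positivity
    rw [hC₀def]; linarith
  set T : ℕ := ⌈(2:ℝ) ^ (1/δ)⌉₊ with hTdef
  refine ⟨C₀ ^ T, one_le_pow₀ hC₀, ?_⟩
  intro n hn
  -- n as product over primeFactors
  have hprodn : (∏ p ∈ n.primeFactors, p ^ (n.factorization p)) = n := by
    rw [← Nat.prod_factorization_eq_prod_primeFactors (fun p a => p ^ a)]
    exact Nat.factorization_prod_pow_eq_self hn
  have hprod : ((n:ℝ)) = ∏ p ∈ n.primeFactors, ((p:ℝ)) ^ (n.factorization p) := by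
    conv_lhs => rw [← hprodn]
    push_cast
    rfl
  have hcard : ((n.divisors.card : ℝ)) = ∏ p ∈ n.primeFactors, ((n.factorization p : ℝ) + 1) := by
    rw [Nat.card_divisors hn]
    push_cast
    rfl
  have hrpow : ((n:ℝ)) ^ δ = ∏ p ∈ n.primeFactors, (((p:ℝ)) ^ (n.factorization p)) ^ δ := by
    rw [hprod, ← Real.finset_prod_rpow _ _ (fun p _ => by positivity) δ]
  -- pointwise comparison
  have hpoint : ∀ p ∈ n.primeFactors,
      ((n.factorization p : ℝ) + 1) ≤
        (if p < T then C₀ else 1) * (((p:ℝ)) ^ (n.factorization p)) ^ δ := by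
    intro p hp
    have hp2 : 2 ≤ p := (Nat.prime_of_mem_primeFactors hp).two_le
    by_cases hcase : p < T
    · simpa [hcase] using pointwise_bound δ hδ p (n.factorization p) hp2
    · simp only [hcase, if_false, one_mul]
      push_neg at hcase
      have hpT : ((2:ℝ)) ^ (1/δ) ≤ (p:ℝ) :=
        le_trans (Nat.le_ceil _) (by exact_mod_cast hcase)
      have hpδ : (2:ℝ) ≤ ((p:ℝ)) ^ δ := by
        have h1 : ((2:ℝ) ^ (1/δ)) ^ δ ≤ ((p:ℝ)) ^ δ :=
          Real.rpow_le_rpow (by positivity) hpT (le_of_lt hδ)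
        rwa [← Real.rpow_mul (by norm_num), one_div, inv_mul_cancel₀ (ne_of_gt hδ),
          Real.rpow_one] at h1
      have heq : (((p:ℝ)) ^ (n.factorization p)) ^ δ = (((p:ℝ)) ^ δ) ^ (n.factorization p) := by
        rw [← Real.rpow_natCast (p:ℝ) (n.factorization p), ← Real.rpow_mul (by positivity),
          mul_comm, Real.rpow_mul (by positivity), Real.rpow_natCast]
      rw [heq]
      calc ((n.factorization p : ℝ) + 1) ≤ (2:ℝ) ^ (n.factorization p) := by
            exact_mod_cast (n.factorization p).lt_two_pow_self
        _ ≤ (((p:ℝ)) ^ δ) ^ (n.factorization p) :=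
            pow_le_pow_left₀ (by norm_num) hpδ _
  have hmain : ((n.divisors.card : ℝ)) ≤
      ∏ p ∈ n.primeFactors, ((if p < T then C₀ else 1) * (((p:ℝ)) ^ (n.factorization p)) ^ δ) := by
    rw [hcard]
    exact Finset.prod_le_prod (fun p _ => by positivity) hpoint
  rw [Finset.prod_mul_distrib] at hmain
  have hsmall : (∏ p ∈ n.primeFactors, (if p < T then C₀ else 1)) ≤ C₀ ^ T := by
    rw [Finset.prod_ite, Finset.prod_const, Finset.prod_const_one, mul_one]
    apply pow_le_pow_right₀ hC₀
    calc (n.primeFactors.filter (· < T)).card ≤ (Finset.range T).card := by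
          apply Finset.card_le_card
          intro p hp
          simp only [Finset.mem_filter] at hp
          exact Finset.mem_range.mpr hp.2
      _ = T := Finset.card_range T
  calc ((n.divisors.card : ℝ))
      ≤ (∏ p ∈ n.primeFactors, (if p < T then C₀ else 1)) *
        ∏ p ∈ n.primeFactors, (((p:ℝ)) ^ (n.factorization p)) ^ δ := hmain
    _ ≤ C₀ ^ T * ((n:ℝ)) ^ δ := by
        rw [hrpow]
        apply mul_le_mul_of_nonneg_right hsmall
        positivity

open scoped Classical in
noncomputable def solSet (k X : ℕ) (h : Polynomial ℤ) : Finset ((Fin k → ℤ) × (Fin k → ℤ)) :=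
  (ibox k X ×ˢ ibox k X).filter fun p => polyOf p.1 = polyOf p.2 + h

def divPool (t m : ℤ) : Finset ℤ :=
  (m.natAbs.divisors).image (fun d : ℕ => t + (d:ℤ)) ∪ (m.natAbs.divisors).image (fun d : ℕ => t - (d:ℤ))

lemma card_divPool (t m : ℤ) : (divPool t m).card ≤ 2 * m.natAbs.divisors.card := by
  refine le_trans (Finset.card_union_le _ _) ?_
  have h1 := Finset.card_image_le (s := m.natAbs.divisors) (f := fun d : ℕ => t + (d:ℤ))
  have h2 := Finset.card_image_le (s := m.natAbs.divisors) (f := fun d : ℕ => t - (d:ℤ))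
  omega

lemma mem_divPool {t m y : ℤ} (hdvd : y - t ∣ m) (hm : m ≠ 0) : y ∈ divPool t m := by
  have hnat : (y - t).natAbs ∈ m.natAbs.divisors :=
    Nat.mem_divisors.mpr ⟨Int.natAbs_dvd_natAbs.mpr hdvd, fun h => hm (Int.natAbs_eq_zero.mp h)⟩
  rcases Int.natAbs_eq (y - t) with h | h
  · apply Finset.mem_union_left
    refine Finset.mem_image.mpr ⟨_, hnat, ?_⟩
    show t + ((y - t).natAbs : ℤ) = y
    omega
  · apply Finset.mem_union_right
    refine Finset.mem_image.mpr ⟨_, hnat, ?_⟩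
    show t - ((y - t).natAbs : ℤ) = y
    omega

noncomputable def rootPool (F : Polynomial ℤ) : Finset ℤ := F.roots.toFinset.image (fun r => -r)

lemma card_rootPool (F : Polynomial ℤ) : (rootPool F).card ≤ F.natDegree :=
  le_trans (Finset.card_image_le) (le_trans (Multiset.toFinset_card_le _) (Polynomial.card_roots' F))

lemma mem_rootPool {F : Polynomial ℤ} {z : ℤ} (hF : F ≠ 0) (hz : F.eval (-z) = 0) :
    z ∈ rootPool F := by
  refine Finset.mem_image.mpr ⟨-z, ?_, by ring⟩
  rw [Multiset.mem_toFinset, Polynomial.mem_roots hF]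
  exact hz

lemma natDegree_diff_le {k : ℕ} (x y : Fin k → ℤ) : (polyOf x - polyOf y).natDegree ≤ k := by
  refine le_trans (Polynomial.natDegree_sub_le _ _) ?_
  rw [polyOf_natDegree, polyOf_natDegree]
  exact le_of_eq (max_self k)

open scoped Classical

lemma solSet_mem {k X : ℕ} {h : Polynomial ℤ} {p : (Fin k → ℤ) × (Fin k → ℤ)}
    (hp : p ∈ solSet k X h) :
    p.1 ∈ ibox k X ∧ p.2 ∈ ibox k X ∧ polyOf p.1 = polyOf p.2 + h := by
  have := Finset.mem_filter.mp hp
  exact ⟨(Finset.mem_product.mp this.1).1, (Finset.mem_product.mp this.1).2, this.2⟩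

lemma cardSA (k X : ℕ) (h : Polynomial ℤ) (hdegh : h.natDegree ≤ k) (i : Fin k) :
    ((solSet k X h).filter fun p => h.eval (-(p.1 i)) ≠ 0).card ≤
      ∑ t ∈ Finset.Icc (1:ℤ) (X:ℤ), ((divPool t (h.eval (-t))).card) ^ k * k ^ k := by
  classical
  set TA := (Finset.Icc (1:ℤ) (X:ℤ)).biUnion fun t =>
    ((Fintype.piFinset fun _ : Fin k => divPool t (h.eval (-t))).biUnion fun y =>
      (Fintype.piFinset fun _ : Fin k => rootPool (polyOf y + h)) ×ˢ ({y} : Finset (Fin k → ℤ)))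
    with hTA
  have hsub : ((solSet k X h).filter fun p => h.eval (-(p.1 i)) ≠ 0) ⊆ TA := by
    intro p hp
    obtain ⟨hp1, hne⟩ := Finset.mem_filter.mp hp
    obtain ⟨hx, hy, heq⟩ := solSet_mem hp1
    set t := p.1 i with ht
    have htmem : t ∈ Finset.Icc (1:ℤ) (X:ℤ) := Finset.mem_Icc.mpr (mem_ibox.mp hx i)
    have hevalt : h.eval (-t) = -∏ j : Fin k, (p.2 j - t) := by
      have h1 : (polyOf p.1).eval (-t) = 0 := polyOf_eval_self p.1 i
      have h2 : (polyOf p.2).eval (-t) = ∏ j : Fin k, (-t + p.2 j) := polyOf_eval p.2 (-t)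
      have h3 : (polyOf p.1).eval (-t) = (polyOf p.2).eval (-t) + h.eval (-t) := by
        rw [heq]; simp
      rw [h1, h2] at h3
      have : h.eval (-t) = -∏ j : Fin k, (-t + p.2 j) := by linarith
      rw [this]
      congr 1
      apply Finset.prod_congr rfl
      intro j _
      ring
    apply Finset.mem_biUnion.mpr
    refine ⟨t, htmem, ?_⟩
    apply Finset.mem_biUnion.mpr
    refine ⟨p.2, ?_, ?_⟩
    · rw [Fintype.mem_piFinset]
      intro j
      apply mem_divPool _ hne
      rw [hevalt, dvd_neg]
      exact Finset.dvd_prod_of_mem _ (Finset.mem_univ j)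
    · rw [Finset.mem_product]
      constructor
      · rw [Fintype.mem_piFinset]
        intro j
        apply mem_rootPool
        · rw [← heq]; exact polyOf_ne_zero p.1
        · rw [← heq]; exact polyOf_eval_self p.1 j
      · exact Finset.mem_singleton_self p.2
  refine le_trans (Finset.card_le_card hsub) ?_
  refine le_trans Finset.card_biUnion_le ?_
  apply Finset.sum_le_sum
  intro t _
  refine le_trans Finset.card_biUnion_le ?_
  have hinner : ∀ y : Fin k → ℤ,
      ((Fintype.piFinset fun _ : Fin k => rootPool (polyOf y + h)) ×ˢ
        ({y} : Finset (Fin k → ℤ))).card ≤ k ^ k := by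
    intro y
    rw [Finset.card_product, Finset.card_singleton, mul_one, Fintype.card_piFinset]
    have hdeg : (polyOf y + h).natDegree ≤ k := by
      refine le_trans (Polynomial.natDegree_add_le _ _) ?_
      rw [polyOf_natDegree]
      exact max_le le_rfl hdegh
    calc ∏ _j : Fin k, (rootPool (polyOf y + h)).card
        ≤ ∏ _j : Fin k, k := by
          apply Finset.prod_le_prod (fun _ _ => Nat.zero_le _)
          intro j _
          exact le_trans (card_rootPool _) hdeg
      _ = k ^ k := by rw [Finset.prod_const, Finset.card_univ, Fintype.card_fin]
  calc ∑ y ∈ Fintype.piFinset fun _ : Fin k => divPool t (h.eval (-t)),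
        ((Fintype.piFinset fun _ : Fin k => rootPool (polyOf y + h)) ×ˢ
          ({y} : Finset (Fin k → ℤ))).card
      ≤ ∑ _y ∈ Fintype.piFinset fun _ : Fin k => divPool t (h.eval (-t)), k ^ k :=
        Finset.sum_le_sum fun y _ => hinner y
    _ = ((divPool t (h.eval (-t))).card) ^ k * k ^ k := by
        rw [Finset.sum_const, smul_eq_mul, Fintype.card_piFinset, Finset.prod_const,
          Finset.card_univ, Fintype.card_fin]

lemma cardSB (k X : ℕ) (h : Polynomial ℤ) (hdegh : h.natDegree ≤ k) (i : Fin k) :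
    ((solSet k X h).filter fun p => h.eval (-(p.2 i)) ≠ 0).card ≤
      ∑ t ∈ Finset.Icc (1:ℤ) (X:ℤ), ((divPool t (h.eval (-t))).card) ^ k * k ^ k := by
  classical
  set TB := (Finset.Icc (1:ℤ) (X:ℤ)).biUnion fun t =>
    ((Fintype.piFinset fun _ : Fin k => divPool t (h.eval (-t))).biUnion fun x =>
      ({x} : Finset (Fin k → ℤ)) ×ˢ (Fintype.piFinset fun _ : Fin k => rootPool (polyOf x - h)))
    with hTB
  have hsub : ((solSet k X h).filter fun p => h.eval (-(p.2 i)) ≠ 0) ⊆ TB := by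
    intro p hp
    obtain ⟨hp1, hne⟩ := Finset.mem_filter.mp hp
    obtain ⟨hx, hy, heq⟩ := solSet_mem hp1
    set t := p.2 i with ht
    have htmem : t ∈ Finset.Icc (1:ℤ) (X:ℤ) := Finset.mem_Icc.mpr (mem_ibox.mp hy i)
    have hevalt : h.eval (-t) = ∏ j : Fin k, (p.1 j - t) := by
      have h1 : (polyOf p.2).eval (-t) = 0 := polyOf_eval_self p.2 i
      have h2 : (polyOf p.1).eval (-t) = ∏ j : Fin k, (-t + p.1 j) := polyOf_eval p.1 (-t)
      have h3 : (polyOf p.1).eval (-t) = (polyOf p.2).eval (-t) + h.eval (-t) := by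
        rw [heq]; simp
      rw [h1, h2, zero_add] at h3
      rw [← h3]
      apply Finset.prod_congr rfl
      intro j _
      ring
    apply Finset.mem_biUnion.mpr
    refine ⟨t, htmem, ?_⟩
    apply Finset.mem_biUnion.mpr
    refine ⟨p.1, ?_, ?_⟩
    · rw [Fintype.mem_piFinset]
      intro j
      apply mem_divPool _ hne
      rw [hevalt]
      exact Finset.dvd_prod_of_mem _ (Finset.mem_univ j)
    · rw [Finset.mem_product]
      refine ⟨Finset.mem_singleton_self p.1, ?_⟩
      rw [Fintype.mem_piFinset]
      intro j
      have hpy : polyOf p.1 - h = polyOf p.2 := by rw [heq]; ring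
      apply mem_rootPool
      · rw [hpy]; exact polyOf_ne_zero p.2
      · rw [hpy]; exact polyOf_eval_self p.2 j
  refine le_trans (Finset.card_le_card hsub) ?_
  refine le_trans Finset.card_biUnion_le ?_
  apply Finset.sum_le_sum
  intro t _
  refine le_trans Finset.card_biUnion_le ?_
  have hinner : ∀ x : Fin k → ℤ,
      (({x} : Finset (Fin k → ℤ)) ×ˢ
        (Fintype.piFinset fun _ : Fin k => rootPool (polyOf x - h))).card ≤ k ^ k := by
    intro x
    rw [Finset.card_product, Finset.card_singleton, one_mul, Fintype.card_piFinset]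
    have hdeg : (polyOf x - h).natDegree ≤ k := by
      refine le_trans (Polynomial.natDegree_sub_le _ _) ?_
      rw [polyOf_natDegree]
      exact max_le le_rfl hdegh
    calc ∏ _j : Fin k, (rootPool (polyOf x - h)).card
        ≤ ∏ _j : Fin k, k := by
          apply Finset.prod_le_prod (fun _ _ => Nat.zero_le _)
          intro j _
          exact le_trans (card_rootPool _) hdeg
      _ = k ^ k := by rw [Finset.prod_const, Finset.card_univ, Fintype.card_fin]
  calc ∑ x ∈ Fintype.piFinset fun _ : Fin k => divPool t (h.eval (-t)),
        (({x} : Finset (Fin k → ℤ)) ×ˢ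
          (Fintype.piFinset fun _ : Fin k => rootPool (polyOf x - h))).card
      ≤ ∑ _x ∈ Fintype.piFinset fun _ : Fin k => divPool t (h.eval (-t)), k ^ k :=
        Finset.sum_le_sum fun x _ => hinner x
    _ = ((divPool t (h.eval (-t))).card) ^ k * k ^ k := by
        rw [Finset.sum_const, smul_eq_mul, Fintype.card_piFinset, Finset.prod_const,
          Finset.card_univ, Fintype.card_fin]

lemma cardSC (k X : ℕ) (h : Polynomial ℤ) (hh : h ≠ 0) (hdegh : h.natDegree ≤ k) :
    ((solSet k X h).filter fun p =>
      (∀ i, h.eval (-(p.1 i)) = 0) ∧ (∀ i, h.eval (-(p.2 i)) = 0)).card ≤ k ^ (2 * k) := by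
  classical
  have hsub : ((solSet k X h).filter fun p =>
      (∀ i, h.eval (-(p.1 i)) = 0) ∧ (∀ i, h.eval (-(p.2 i)) = 0)) ⊆
      (Fintype.piFinset fun _ : Fin k => rootPool h) ×ˢ
      (Fintype.piFinset fun _ : Fin k => rootPool h) := by
    intro p hp
    obtain ⟨_, hcond⟩ := Finset.mem_filter.mp hp
    rw [Finset.mem_product]
    constructor
    · rw [Fintype.mem_piFinset]
      exact fun i => mem_rootPool hh (hcond.1 i)
    · rw [Fintype.mem_piFinset]
      exact fun i => mem_rootPool hh (hcond.2 i)
  refine le_trans (Finset.card_le_card hsub) ?_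
  rw [Finset.card_product, Fintype.card_piFinset, Finset.prod_const, Finset.card_univ,
    Fintype.card_fin]
  have hc : (rootPool h).card ≤ k := le_trans (card_rootPool h) hdegh
  calc (rootPool h).card ^ k * (rootPool h).card ^ k
      ≤ k ^ k * k ^ k := Nat.mul_le_mul (Nat.pow_le_pow_left hc k) (Nat.pow_le_pow_left hc k)
    _ = k ^ (2 * k) := by rw [← pow_add]; ring_nf

lemma solSet_cover (k X : ℕ) (h : Polynomial ℤ) :
    (solSet k X h).card ≤
      ((solSet k X h).filter fun p =>
        (∀ i, h.eval (-(p.1 i)) = 0) ∧ (∀ i, h.eval (-(p.2 i)) = 0)).card +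
      ((∑ i : Fin k, ((solSet k X h).filter fun p => h.eval (-(p.1 i)) ≠ 0).card) +
       (∑ i : Fin k, ((solSet k X h).filter fun p => h.eval (-(p.2 i)) ≠ 0).card)) := by
  classical
  have hsub : solSet k X h ⊆
      ((solSet k X h).filter fun p =>
        (∀ i, h.eval (-(p.1 i)) = 0) ∧ (∀ i, h.eval (-(p.2 i)) = 0)) ∪
      ((Finset.univ.biUnion fun i : Fin k =>
        (solSet k X h).filter fun p => h.eval (-(p.1 i)) ≠ 0) ∪
       (Finset.univ.biUnion fun i : Fin k =>
        (solSet k X h).filter fun p => h.eval (-(p.2 i)) ≠ 0)) := by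
    intro p hp
    by_cases h1 : ∃ i, h.eval (-(p.1 i)) ≠ 0
    · obtain ⟨i, hi⟩ := h1
      exact Finset.mem_union_right _ (Finset.mem_union_left _
        (Finset.mem_biUnion.mpr ⟨i, Finset.mem_univ i, Finset.mem_filter.mpr ⟨hp, hi⟩⟩))
    · by_cases h2 : ∃ i, h.eval (-(p.2 i)) ≠ 0
      · obtain ⟨i, hi⟩ := h2
        exact Finset.mem_union_right _ (Finset.mem_union_right _
          (Finset.mem_biUnion.mpr ⟨i, Finset.mem_univ i, Finset.mem_filter.mpr ⟨hp, hi⟩⟩))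
      · push_neg at h1 h2
        exact Finset.mem_union_left _ (Finset.mem_filter.mpr ⟨hp, h1, h2⟩)
  refine le_trans (Finset.card_le_card hsub) ?_
  refine le_trans (Finset.card_union_le _ _) ?_
  apply Nat.add_le_add le_rfl
  refine le_trans (Finset.card_union_le _ _) ?_
  exact Nat.add_le_add Finset.card_biUnion_le Finset.card_biUnion_le

lemma solSet_card_bound (k : ℕ) (hk : 1 ≤ k) (ε : ℝ) (hε : 0 < ε) :
    ∃ C : ℝ, 1 ≤ C ∧ ∀ X : ℕ, 1 ≤ X → ∀ h : Polynomial ℤ, h ≠ 0 →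
      ((solSet k X h).card : ℝ) ≤ C * (X : ℝ) ^ ((1:ℝ) + ε) := by
  classical
  have hk0 : (0:ℝ) < (k:ℝ) := by exact_mod_cast Nat.lt_of_lt_of_le Nat.zero_lt_one hk
  set δ : ℝ := ε / ((k:ℝ) * (k:ℝ)) with hδdef
  have hδ : 0 < δ := div_pos hε (by positivity)
  obtain ⟨C₀, hC₀1, hC₀⟩ := divisor_bound δ hδ
  have hC₀0 : (0:ℝ) < C₀ := lt_of_lt_of_le one_pos hC₀1
  set c₁ : ℝ := (2 * C₀ * (2:ℝ) ^ δ) ^ k with hc₁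
  have hc₁0 : 0 < c₁ := by positivity
  set C : ℝ := (k:ℝ) ^ (2*k) + 2 * (k:ℝ) * (k:ℝ) ^ k * c₁ with hCdef
  have hk1 : (1:ℝ) ≤ (k:ℝ) ^ (2*k) := one_le_pow₀ (by exact_mod_cast hk)
  have hCge : (1:ℝ) ≤ C := by
    have h2 : (0:ℝ) ≤ 2 * (k:ℝ) * (k:ℝ) ^ k * c₁ := by positivity
    rw [hCdef]
    linarith
  refine ⟨C, hCge, ?_⟩
  intro X hX h hh
  have hXr : (1:ℝ) ≤ (X:ℝ) := by exact_mod_cast hX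
  have hXpos : (0:ℝ) < (X:ℝ) := lt_of_lt_of_le one_pos hXr
  have hrpow1 : (1:ℝ) ≤ (X:ℝ) ^ ((1:ℝ) + ε) :=
    Real.one_le_rpow hXr (by linarith)
  have hCpos : (0:ℝ) < C := by positivity
  by_cases hempty : solSet k X h = ∅
  · rw [hempty]
    simp only [Finset.card_empty, Nat.cast_zero]
    positivity
  obtain ⟨p₀, hp₀⟩ := Finset.nonempty_iff_ne_empty.mpr hempty
  obtain ⟨hx₀, hy₀, heq₀⟩ := solSet_mem hp₀
  have hhdiff : h = polyOf p₀.1 - polyOf p₀.2 := by rw [heq₀]; ring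
  have hdegh : h.natDegree ≤ k := hhdiff ▸ natDegree_diff_le _ _
  -- eval bound
  have heval : ∀ t ∈ Finset.Icc (1:ℤ) (X:ℤ), |h.eval (-t)| ≤ 2 * (X:ℤ) ^ k := by
    intro t ht
    obtain ⟨ht1, ht2⟩ := Finset.mem_Icc.mp ht
    have hbnd : ∀ z : Fin k → ℤ, z ∈ ibox k X → |(polyOf z).eval (-t)| ≤ (X:ℤ) ^ k := by
      intro z hz
      rw [polyOf_eval, Finset.abs_prod]
      calc ∏ i : Fin k, |(-t + z i)| ≤ ∏ _i : Fin k, (X:ℤ) := by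
            apply Finset.prod_le_prod (fun _ _ => abs_nonneg _)
            intro i _
            obtain ⟨hz1, hz2⟩ := mem_ibox.mp hz i
            rw [abs_le]
            constructor <;> linarith
        _ = (X:ℤ) ^ k := by rw [Finset.prod_const, Finset.card_univ, Fintype.card_fin]
    have he : h.eval (-t) = (polyOf p₀.1).eval (-t) - (polyOf p₀.2).eval (-t) := by
      rw [hhdiff]; simp
    rw [he]
    calc |(polyOf p₀.1).eval (-t) - (polyOf p₀.2).eval (-t)|
        ≤ |(polyOf p₀.1).eval (-t)| + |(polyOf p₀.2).eval (-t)| := abs_sub _ _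
      _ ≤ (X:ℤ)^k + (X:ℤ)^k := add_le_add (hbnd _ hx₀) (hbnd _ hy₀)
      _ = 2 * (X:ℤ)^k := by ring
  -- divisor pool bound
  set D : ℝ := 2 * C₀ * (2:ℝ) ^ δ * (X:ℝ) ^ ((k:ℝ) * δ) with hDdef
  have hXkδ : (0:ℝ) < (X:ℝ) ^ ((k:ℝ) * δ) := Real.rpow_pos_of_pos hXpos _
  have hDpos : 0 < D := by positivity
  have hdivcard : ∀ t ∈ Finset.Icc (1:ℤ) (X:ℤ), ((divPool t (h.eval (-t))).card : ℝ) ≤ D := by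
    intro t ht
    have h1 : ((divPool t (h.eval (-t))).card : ℝ) ≤
        2 * ((h.eval (-t)).natAbs.divisors.card : ℝ) := by
      exact_mod_cast card_divPool t (h.eval (-t))
    by_cases hm : (h.eval (-t)).natAbs = 0
    · rw [hm] at h1
      simp only [Nat.divisors_zero, Finset.card_empty, Nat.cast_zero, mul_zero] at h1
      linarith
    · have h2 : (((h.eval (-t)).natAbs.divisors.card : ℝ)) ≤
          C₀ * ((h.eval (-t)).natAbs : ℝ) ^ δ := hC₀ _ hm
      have h3 : ((h.eval (-t)).natAbs : ℝ) ≤ 2 * (X:ℝ) ^ (k:ℕ) := by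
        have := heval t ht
        have h4 : ((h.eval (-t)).natAbs : ℤ) ≤ 2 * (X:ℤ) ^ k := by
          rw [Int.abs_eq_natAbs] at this
          exact_mod_cast this
        exact_mod_cast h4
      have h5 : ((h.eval (-t)).natAbs : ℝ) ^ δ ≤ (2 * (X:ℝ) ^ (k:ℕ)) ^ δ :=
        Real.rpow_le_rpow (by positivity) h3 (le_of_lt hδ)
      have h6 : ((2:ℝ) * (X:ℝ) ^ (k:ℕ)) ^ δ = (2:ℝ) ^ δ * (X:ℝ) ^ ((k:ℝ) * δ) := by
        rw [Real.mul_rpow (by norm_num) (by positivity), ← Real.rpow_natCast (X:ℝ) k,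
          ← Real.rpow_mul (le_of_lt hXpos)]
      calc ((divPool t (h.eval (-t))).card : ℝ)
          ≤ 2 * ((h.eval (-t)).natAbs.divisors.card : ℝ) := h1
        _ ≤ 2 * (C₀ * ((h.eval (-t)).natAbs : ℝ) ^ δ) := by linarith
        _ ≤ 2 * (C₀ * ((2:ℝ) ^ δ * (X:ℝ) ^ ((k:ℝ) * δ))) := by
            rw [← h6]
            have := mul_le_mul_of_nonneg_left h5 (le_of_lt hC₀0)
            linarith
        _ = D := by rw [hDdef]; ring
  -- sum over t bound
  have hsumbound : ((∑ t ∈ Finset.Icc (1:ℤ) (X:ℤ),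
      ((divPool t (h.eval (-t))).card) ^ k * k ^ k : ℕ) : ℝ) ≤
      (X:ℝ) * (D ^ k * (k:ℝ) ^ k) := by
    push_cast
    calc ∑ t ∈ Finset.Icc (1:ℤ) (X:ℤ),
          (((divPool t (h.eval (-t))).card : ℝ)) ^ k * ((k:ℝ)) ^ k
        ≤ ∑ _t ∈ Finset.Icc (1:ℤ) (X:ℤ), D ^ k * ((k:ℝ)) ^ k := by
          apply Finset.sum_le_sum
          intro t ht
          apply mul_le_mul_of_nonneg_right _ (by positivity)
          exact pow_le_pow_left₀ (Nat.cast_nonneg _) (hdivcard t ht) k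
      _ = ((Finset.Icc (1:ℤ) (X:ℤ)).card : ℝ) * (D ^ k * ((k:ℝ)) ^ k) := by
          rw [Finset.sum_const, nsmul_eq_mul]
      _ = (X:ℝ) * (D ^ k * (k:ℝ) ^ k) := by
          rw [Int.card_Icc]
          norm_num
  -- assemble
  have hcover := solSet_cover k X h
  have hSA : ∀ i : Fin k, (((solSet k X h).filter
      fun p => h.eval (-(p.1 i)) ≠ 0).card : ℝ) ≤ (X:ℝ) * (D ^ k * (k:ℝ) ^ k) :=
    fun i => le_trans (by exact_mod_cast cardSA k X h hdegh i) hsumbound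
  have hSB : ∀ i : Fin k, (((solSet k X h).filter
      fun p => h.eval (-(p.2 i)) ≠ 0).card : ℝ) ≤ (X:ℝ) * (D ^ k * (k:ℝ) ^ k) :=
    fun i => le_trans (by exact_mod_cast cardSB k X h hdegh i) hsumbound
  have hSC : (((solSet k X h).filter fun p =>
      (∀ i, h.eval (-(p.1 i)) = 0) ∧ (∀ i, h.eval (-(p.2 i)) = 0)).card : ℝ) ≤
      (k:ℝ) ^ (2*k) := by exact_mod_cast cardSC k X h hh hdegh
  have htotal : ((solSet k X h).card : ℝ) ≤
      (k:ℝ) ^ (2*k) + 2 * (k:ℝ) * ((X:ℝ) * (D ^ k * (k:ℝ) ^ k)) := by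
    have h0 : ((solSet k X h).card : ℝ) ≤
        (((solSet k X h).filter fun p =>
          (∀ i, h.eval (-(p.1 i)) = 0) ∧ (∀ i, h.eval (-(p.2 i)) = 0)).card : ℝ) +
        ((∑ i : Fin k, (((solSet k X h).filter
            fun p => h.eval (-(p.1 i)) ≠ 0).card : ℝ)) +
         (∑ i : Fin k, (((solSet k X h).filter
            fun p => h.eval (-(p.2 i)) ≠ 0).card : ℝ))) := by
      exact_mod_cast hcover
    have hA : (∑ i : Fin k, (((solSet k X h).filter
        fun p => h.eval (-(p.1 i)) ≠ 0).card : ℝ)) ≤ (k:ℝ) * ((X:ℝ) * (D ^ k * (k:ℝ) ^ k)) := by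
      calc (∑ i : Fin k, (((solSet k X h).filter
            fun p => h.eval (-(p.1 i)) ≠ 0).card : ℝ))
          ≤ ∑ _i : Fin k, (X:ℝ) * (D ^ k * (k:ℝ) ^ k) := Finset.sum_le_sum fun i _ => hSA i
        _ = (k:ℝ) * ((X:ℝ) * (D ^ k * (k:ℝ) ^ k)) := by
            rw [Finset.sum_const, Finset.card_univ, Fintype.card_fin, nsmul_eq_mul]
    have hB : (∑ i : Fin k, (((solSet k X h).filter
        fun p => h.eval (-(p.2 i)) ≠ 0).card : ℝ)) ≤ (k:ℝ) * ((X:ℝ) * (D ^ k * (k:ℝ) ^ k)) := by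
      calc (∑ i : Fin k, (((solSet k X h).filter
            fun p => h.eval (-(p.2 i)) ≠ 0).card : ℝ))
          ≤ ∑ _i : Fin k, (X:ℝ) * (D ^ k * (k:ℝ) ^ k) := Finset.sum_le_sum fun i _ => hSB i
        _ = (k:ℝ) * ((X:ℝ) * (D ^ k * (k:ℝ) ^ k)) := by
            rw [Finset.sum_const, Finset.card_univ, Fintype.card_fin, nsmul_eq_mul]
    linarith
  -- identify D^k with c₁ * X^ε
  have hDk : D ^ k = c₁ * (X:ℝ) ^ ε := by
    rw [hDdef, hc₁]
    rw [mul_pow, ← Real.rpow_natCast ((X:ℝ) ^ ((k:ℝ) * δ)) k, ← Real.rpow_mul (le_of_lt hXpos)]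
    congr 2
    rw [hδdef]
    field_simp
  have hfinal : (X:ℝ) * ((X:ℝ) ^ ε) = (X:ℝ) ^ ((1:ℝ) + ε) := by
    rw [Real.rpow_add hXpos, Real.rpow_one]
  calc ((solSet k X h).card : ℝ)
      ≤ (k:ℝ) ^ (2*k) + 2 * (k:ℝ) * ((X:ℝ) * (D ^ k * (k:ℝ) ^ k)) := htotal
    _ = (k:ℝ) ^ (2*k) + 2 * (k:ℝ) * (k:ℝ) ^ k * c₁ * ((X:ℝ) * (X:ℝ) ^ ε) := by
        rw [hDk]; ring
    _ = (k:ℝ) ^ (2*k) + 2 * (k:ℝ) * (k:ℝ) ^ k * c₁ * ((X:ℝ) ^ ((1:ℝ) + ε)) := by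
        rw [hfinal]
    _ ≤ C * (X:ℝ) ^ ((1:ℝ) + ε) := by
        rw [hCdef]
        have hkk : (0:ℝ) < 2 * (k:ℝ) * (k:ℝ) ^ k * c₁ := by positivity
        nlinarith [hrpow1, hkk]


lemma pairCount_eq_card (k X : ℕ) (P : (Fin k → ℤ) → (Fin k → ℤ) → Prop)
    [DecidablePred fun p : (Fin k → ℤ) × (Fin k → ℤ) => P p.1 p.2] :
    pairCount k X P = ((ibox k X ×ˢ ibox k X).filter fun p => P p.1 p.2).card := by
  rw [pairCount]
  have hset : {p : (Fin k → ℤ) × (Fin k → ℤ) |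
      (∀ i, 1 ≤ p.1 i ∧ p.1 i ≤ (X:ℤ)) ∧ (∀ i, 1 ≤ p.2 i ∧ p.2 i ≤ (X:ℤ)) ∧ P p.1 p.2} =
      ↑((ibox k X ×ˢ ibox k X).filter fun p => P p.1 p.2) := by
    ext p
    simp only [Set.mem_setOf_eq, Finset.coe_filter, Finset.mem_product, mem_ibox,
      Set.mem_setOf_eq]
    tauto
  rw [show (Nat.card {p : (Fin k → ℤ) × (Fin k → ℤ) //
      (∀ i, 1 ≤ p.1 i ∧ p.1 i ≤ (X:ℤ)) ∧ (∀ i, 1 ≤ p.2 i ∧ p.2 i ≤ (X:ℤ)) ∧ P p.1 p.2}) =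
      Nat.card {p : (Fin k → ℤ) × (Fin k → ℤ) |
      (∀ i, 1 ≤ p.1 i ∧ p.1 i ≤ (X:ℤ)) ∧ (∀ i, 1 ≤ p.2 i ∧ p.2 i ≤ (X:ℤ)) ∧ P p.1 p.2} from rfl,
    Nat.card_coe_set_eq, hset, Set.ncard_coe_finset]

lemma abs_esymm_le {k l X : ℕ} (hl : l ≤ k) {x : Fin k → ℤ} (hx : x ∈ ibox k X) :
    |esymm k l x| ≤ 2 ^ k * (X:ℤ) ^ l := by
  rw [esymm]
  refine le_trans (Finset.abs_sum_le_sum_abs _ _) ?_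
  have hterm : ∀ s ∈ Finset.powersetCard l (Finset.univ : Finset (Fin k)),
      |∏ i ∈ s, x i| ≤ (X:ℤ) ^ l := by
    intro s hs
    obtain ⟨hsub, hcard⟩ := Finset.mem_powersetCard.mp hs
    rw [Finset.abs_prod]
    calc ∏ i ∈ s, |x i| ≤ ∏ _i ∈ s, (X:ℤ) := by
          apply Finset.prod_le_prod (fun _ _ => abs_nonneg _)
          intro i _
          obtain ⟨h1, h2⟩ := mem_ibox.mp hx i
          rw [abs_le]; constructor <;> linarith
      _ = (X:ℤ) ^ l := by rw [Finset.prod_const, hcard]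
  calc ∑ s ∈ Finset.powersetCard l (Finset.univ : Finset (Fin k)), |∏ i ∈ s, x i|
      ≤ ∑ _s ∈ Finset.powersetCard l (Finset.univ : Finset (Fin k)), (X:ℤ) ^ l :=
        Finset.sum_le_sum hterm
    _ = ((Finset.powersetCard l (Finset.univ : Finset (Fin k))).card : ℤ) * (X:ℤ) ^ l := by
        rw [Finset.sum_const, nsmul_eq_mul]
    _ ≤ 2 ^ k * (X:ℤ) ^ l := by
        apply mul_le_mul_of_nonneg_right _ (by positivity)
        have h1 : (Finset.powersetCard l (Finset.univ : Finset (Fin k))).card = k.choose l := by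
          rw [Finset.card_powersetCard, Finset.card_univ, Fintype.card_fin]
        have h2 : k.choose l ≤ 2 ^ k := by
          calc k.choose l ≤ ∑ i ∈ Finset.range (k+1), k.choose i :=
                Finset.single_le_sum (fun _ _ => Nat.zero_le _)
                  (Finset.mem_range.mpr (Nat.lt_succ_of_le hl))
            _ = 2 ^ k := Nat.sum_range_choose k
        exact_mod_cast le_trans (le_of_eq h1) h2

lemma gauss_sum (k : ℕ) : (∑ l ∈ Finset.Icc 1 k, l) * 2 = k * (k + 1) := by
  induction k with
  | zero => simp
  | succ n ih =>
    rw [Finset.sum_Icc_succ_top (Nat.le_add_left 1 n)]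
    ring_nf
    ring_nf at ih
    omega

set_option maxHeartbeats 1000000 in
/-- Theorem 1.1, first part. Let `φ_1,…,φ_r` be symmetric polynomials of the shape
`φ_j(z) = Σ_{l=1}^k a_{jl} σ_l(z)` with respective degrees `k_1 < … < k_r = k`. Then for each
`ε > 0` one has `N_k(X;φ) = T_k(X) + O(X^{w(φ)+1+ε})`, where
`w(φ) = k(k+1)/2 − (k_1 + … + k_r)`. -/
theorem paucity_linear_combinations (k r : ℕ) (hr : 0 < r) (kk : Fin r → ℕ)
    (hmono : StrictMono kk) (hfirst : 1 ≤ kk ⟨0, hr⟩)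
    (hlast : kk ⟨r - 1, Nat.sub_lt hr Nat.one_pos⟩ = k)
    (a : Fin r → ℕ → ℤ)
    (hdeg : ∀ j, a j (kk j) ≠ 0 ∧ ∀ l, kk j < l → l ≤ k → a j l = 0)
    (φ : Fin r → (Fin k → ℤ) → ℤ)
    (hφ : ∀ j x, φ j x = ∑ l ∈ Finset.Icc 1 k, a j l * esymm k l x)
    (ε : ℝ) (hε : 0 < ε) :
    (fun X : ℕ =>
        (pairCount k X (fun x y => ∀ j, φ j x = φ j y) : ℝ) - (permCount k X : ℝ))
      =O[atTop]
      fun X : ℕ => (X : ℝ) ^ ((k * (k + 1) : ℝ) / 2 - (∑ j, (kk j : ℝ)) + 1 + ε) := by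
  -- basic facts about the degrees
  have hub : ∀ j, kk j ≤ k := by
    intro j
    rw [← hlast]
    apply hmono.monotone
    exact Fin.mk_le_mk.mpr (by omega)
  have hlb : ∀ j, 1 ≤ kk j := by
    intro j
    refine le_trans hfirst (hmono.monotone ?_)
    exact Fin.mk_le_mk.mpr (by omega)
  have hk1 : 1 ≤ k := le_trans (hlb _) (hub ⟨0, hr⟩)
  set K : Finset ℕ := Finset.image kk Finset.univ with hKdef
  set L : Finset ℕ := (Finset.Icc 1 k) \ K with hLdef
  have hKsub : K ⊆ Finset.Icc 1 k := by
    intro l hl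
    obtain ⟨j, _, rfl⟩ := Finset.mem_image.mp hl
    exact Finset.mem_Icc.mpr ⟨hlb j, hub j⟩
  have hsumK : ∑ l ∈ K, l = ∑ j, kk j := Finset.sum_image (fun i _ j _ h => hmono.injective h)
  have hsumsplit : (∑ l ∈ L, l) + (∑ l ∈ K, l) = ∑ l ∈ Finset.Icc 1 k, l :=
    Finset.sum_sdiff hKsub
  set w : ℕ := ∑ l ∈ L, l with hwdef
  -- per-h constant
  obtain ⟨C₁, hC₁1, hC₁⟩ := solSet_card_bound k hk1 ε hε
  set Cbig : ℝ := (3 * (2:ℝ) ^ (k+1)) ^ L.card * C₁ with hCbigdef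
  have hCbigpos : 0 < Cbig := by positivity
  rw [Asymptotics.isBigO_iff]
  refine ⟨Cbig, ?_⟩
  filter_upwards [Filter.eventually_ge_atTop 1] with X hX
  have hXr : (1:ℝ) ≤ (X:ℝ) := by exact_mod_cast hX
  have hXpos : (0:ℝ) < (X:ℝ) := lt_of_lt_of_le one_pos hXr
  -- the three finsets
  set Sfull := ((ibox k X ×ˢ ibox k X).filter fun p => ∀ j, φ j p.1 = φ j p.2) with hSfull
  set permP : ((Fin k → ℤ) × (Fin k → ℤ)) → Prop :=
    fun p => ∃ π : Equiv.Perm (Fin k), p.2 = p.1 ∘ π with hpermP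
  set Sperm := ((ibox k X ×ˢ ibox k X).filter fun p => permP p) with hSperm
  set Sbad := Sfull.filter (fun p => ¬ permP p) with hSbad
  have hperm_imp : ∀ p : (Fin k → ℤ) × (Fin k → ℤ), permP p → ∀ j, φ j p.1 = φ j p.2 := by
    rintro p ⟨π, hπ⟩ j
    rw [hφ, hφ]
    apply Finset.sum_congr rfl
    intro l hl
    rw [hπ, esymm_comp_perm p.1 π (Finset.mem_Icc.mp hl).2]
  have hcount : (pairCount k X (fun x y => ∀ j, φ j x = φ j y) : ℝ) - (permCount k X : ℝ) =
      (Sbad.card : ℝ) := by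
    have h1 : Sfull.filter permP = Sperm := by
      rw [hSfull, hSperm, Finset.filter_filter]
      apply Finset.filter_congr
      intro p _
      constructor
      · exact fun h => h.2
      · exact fun h => ⟨hperm_imp p h, h⟩
    have h2 : (Sfull.filter permP).card + (Sfull.filter fun p => ¬ permP p).card = Sfull.card :=
      Finset.card_filter_add_card_filter_not _
    have h3 : pairCount k X (fun x y => ∀ j, φ j x = φ j y) = Sfull.card := by
      rw [hSfull]; exact pairCount_eq_card k X _
    have h4 : permCount k X = Sperm.card := by
      rw [permCount, hSperm]; exact pairCount_eq_card k X _
    rw [h3, h4, ← h2, h1, hSbad]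
    push_cast
    ring
  rw [hcount]
  -- fibration over the difference polynomial
  set Hmap : ((Fin k → ℤ) × (Fin k → ℤ)) → Polynomial ℤ :=
    fun p => polyOf p.1 - polyOf p.2 with hHmap
  have hSbad_box : ∀ p ∈ Sbad, p.1 ∈ ibox k X ∧ p.2 ∈ ibox k X := by
    intro p hp
    have := Finset.mem_product.mp (Finset.mem_filter.mp (Finset.mem_filter.mp hp).1).1
    exact this
  have hSbad_φ : ∀ p ∈ Sbad, ∀ j, φ j p.1 = φ j p.2 := by
    intro p hp
    exact (Finset.mem_filter.mp (Finset.mem_filter.mp hp).1).2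
  have hSbad_nperm : ∀ p ∈ Sbad, ¬ permP p := fun p hp => (Finset.mem_filter.mp hp).2
  -- each fiber is inside solSet
  have hfiber : ∀ h : Polynomial ℤ,
      (Sbad.filter fun p => Hmap p = h) ⊆ solSet k X h := by
    intro h p hp
    obtain ⟨hp1, hp2⟩ := Finset.mem_filter.mp hp
    obtain ⟨hb1, hb2⟩ := hSbad_box p hp1
    rw [solSet, Finset.mem_filter]
    refine ⟨Finset.mem_product.mpr ⟨hb1, hb2⟩, ?_⟩
    rw [← hp2, hHmap]
    ring
  have himg_ne : ∀ h ∈ Sbad.image Hmap, h ≠ 0 := by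
    intro h hh
    obtain ⟨p, hp, rfl⟩ := Finset.mem_image.mp hh
    intro h0
    have : polyOf p.1 = polyOf p.2 := by
      have := sub_eq_zero.mp h0
      exact this
    exact hSbad_nperm p hp (exists_perm_of_polyOf_eq this)
  -- the coefficient relations
  have hφrel : ∀ p ∈ Sbad, ∀ j,
      ∑ l ∈ Finset.Icc 1 k, a j l * (Hmap p).coeff (k - l) = 0 := by
    intro p hp j
    have heq : ∑ l ∈ Finset.Icc 1 k, a j l * (Hmap p).coeff (k - l) =
        (∑ l ∈ Finset.Icc 1 k, a j l * esymm k l p.1) -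
        (∑ l ∈ Finset.Icc 1 k, a j l * esymm k l p.2) := by
      rw [← Finset.sum_sub_distrib]
      apply Finset.sum_congr rfl
      intro l hl
      rw [hHmap]
      simp only [Polynomial.coeff_sub]
      rw [polyOf_coeff _ (Finset.mem_Icc.mp hl).2, polyOf_coeff _ (Finset.mem_Icc.mp hl).2]
      ring
    rw [heq, ← hφ, ← hφ, hSbad_φ p hp j, sub_self]
  -- determination of the K-indexed coefficients
  have hdet : ∀ p ∈ Sbad, ∀ q ∈ Sbad,
      (∀ l ∈ L, (Hmap p).coeff (k - l) = (Hmap q).coeff (k - l)) →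
      ∀ l, l ∈ Finset.Icc 1 k → (Hmap p).coeff (k - l) = (Hmap q).coeff (k - l) := by
    intro p hp q hq hLeq l
    induction l using Nat.strong_induction_on with
    | _ l IH =>
      intro hl
      by_cases hlL : l ∈ L
      · exact hLeq l hlL
      · have hlK : l ∈ K := by
          rcases Finset.mem_sdiff.mp (Finset.mem_sdiff.mpr ⟨hl, fun h => hlL (by exact h)⟩) with _
          · by_contra hcon
            exact hlL (Finset.mem_sdiff.mpr ⟨hl, hcon⟩)
        obtain ⟨j, _, hj⟩ := Finset.mem_image.mp hlK
        obtain ⟨m, rfl⟩ : ∃ m, l = m + 1 := ⟨l - 1, by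
          have := (Finset.mem_Icc.mp hl).1; omega⟩
        have hmk : m + 1 ≤ k := (Finset.mem_Icc.mp hl).2
        have hsum_eq : ∀ s ∈ Sbad,
            a j (m+1) * (Hmap s).coeff (k - (m+1)) +
              ∑ l' ∈ Finset.Icc 1 m, a j l' * (Hmap s).coeff (k - l') = 0 := by
          intro s hs
          have h1 : ∑ l' ∈ Finset.Icc 1 (m+1), a j l' * (Hmap s).coeff (k - l') =
              ∑ l' ∈ Finset.Icc 1 k, a j l' * (Hmap s).coeff (k - l') := by
            apply Finset.sum_subset (Finset.Icc_subset_Icc le_rfl hmk)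
            intro l' hl' hnot
            have hl'k := Finset.mem_Icc.mp hl'
            have : m + 1 < l' := by
              by_contra hcon
              exact hnot (Finset.mem_Icc.mpr ⟨hl'k.1, by omega⟩)
            have ha0 : a j l' = 0 := (hdeg j).2 l' (by omega) hl'k.2
            rw [ha0, zero_mul]
          have h2 : ∑ l' ∈ Finset.Icc 1 (m+1), a j l' * (Hmap s).coeff (k - l') =
              ∑ l' ∈ Finset.Icc 1 m, a j l' * (Hmap s).coeff (k - l') +
                a j (m+1) * (Hmap s).coeff (k - (m+1)) :=
            Finset.sum_Icc_succ_top (by omega) _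
          rw [h1, hφrel s hs j] at h2
          linarith [h2]
        have hsump := hsum_eq p hp
        have hsumq := hsum_eq q hq
        have htail : ∑ l' ∈ Finset.Icc 1 m, a j l' * (Hmap p).coeff (k - l') =
            ∑ l' ∈ Finset.Icc 1 m, a j l' * (Hmap q).coeff (k - l') := by
          apply Finset.sum_congr rfl
          intro l' hl'
          have hl'm := Finset.mem_Icc.mp hl'
          rw [IH l' (by omega) (Finset.mem_Icc.mpr ⟨hl'm.1, by omega⟩)]
        have ha : a j (m+1) ≠ 0 := by rw [← hj]; exact (hdeg j).1
        have : a j (m+1) * (Hmap p).coeff (k - (m+1)) =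
            a j (m+1) * (Hmap q).coeff (k - (m+1)) := by linarith
        exact mul_left_cancel₀ ha this
  -- full equality of polynomials from L-coefficients
  have hfulldet : ∀ p ∈ Sbad, ∀ q ∈ Sbad,
      (∀ l ∈ L, (Hmap p).coeff (k - l) = (Hmap q).coeff (k - l)) → Hmap p = Hmap q := by
    intro p hp q hq hLeq
    have hall := hdet p hp q hq hLeq
    ext n
    rcases lt_trichotomy n k with hn | hn | hn
    · have : n = k - (k - n) := by omega
      rw [this]
      exact hall (k - n) (Finset.mem_Icc.mpr ⟨by omega, by omega⟩)
    · have hcoeffk : ∀ s : (Fin k → ℤ) × (Fin k → ℤ), (Hmap s).coeff k = 0 := by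
        intro s
        rw [hHmap]
        simp only [Polynomial.coeff_sub]
        have h1 : (polyOf s.1).coeff k = 1 := by
          have := (polyOf_monic s.1).coeff_natDegree
          rwa [polyOf_natDegree] at this
        have h2 : (polyOf s.2).coeff k = 1 := by
          have := (polyOf_monic s.2).coeff_natDegree
          rwa [polyOf_natDegree] at this
        rw [h1, h2, sub_self]
      rw [hn, hcoeffk p, hcoeffk q]
    · have hz : ∀ s : (Fin k → ℤ) × (Fin k → ℤ), (Hmap s).coeff n = 0 := by
        intro s
        apply Polynomial.coeff_eq_zero_of_natDegree_lt
        exact lt_of_le_of_lt (natDegree_diff_le s.1 s.2) hn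
      rw [hz p, hz q]
  -- bound the coefficients on L
  set B : ℕ → ℤ := fun l => 2^(k+1) * (X:ℤ)^l with hB
  set T : Finset ({l // l ∈ L} → ℤ) :=
    Fintype.piFinset fun l => Finset.Icc (-(B l.1)) (B l.1) with hT
  set ψ : Polynomial ℤ → ({l // l ∈ L} → ℤ) := fun h => fun l => h.coeff (k - l.1) with hψ
  have hmaps : ∀ h ∈ Sbad.image Hmap, ψ h ∈ T := by
    intro h hh
    obtain ⟨p, hp, rfl⟩ := Finset.mem_image.mp hh
    rw [hT, Fintype.mem_piFinset]
    intro l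
    have hlIcc : l.1 ∈ Finset.Icc 1 k := (Finset.mem_sdiff.mp l.2).1
    have hlk : l.1 ≤ k := (Finset.mem_Icc.mp hlIcc).2
    obtain ⟨hb1, hb2⟩ := hSbad_box p hp
    have hco : (Hmap p).coeff (k - l.1) = esymm k l.1 p.1 - esymm k l.1 p.2 := by
      rw [hHmap]
      simp only [Polynomial.coeff_sub]
      rw [polyOf_coeff _ hlk, polyOf_coeff _ hlk]
    have habs : |(Hmap p).coeff (k - l.1)| ≤ B l.1 := by
      rw [hco, hB]
      have h1 := abs_esymm_le hlk hb1
      have h2 := abs_esymm_le hlk hb2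
      calc |esymm k l.1 p.1 - esymm k l.1 p.2|
          ≤ |esymm k l.1 p.1| + |esymm k l.1 p.2| := abs_sub _ _
        _ ≤ 2^k * (X:ℤ)^l.1 + 2^k * (X:ℤ)^l.1 := add_le_add h1 h2
        _ = 2^(k+1) * (X:ℤ)^l.1 := by ring
    rw [Finset.mem_Icc]
    rw [abs_le] at habs
    exact habs
  have hinj : Set.InjOn ψ ↑(Sbad.image Hmap) := by
    intro h₁ hh₁ h₂ hh₂ hψeq
    obtain ⟨p, hp, rfl⟩ := Finset.mem_image.mp (Finset.mem_coe.mp hh₁)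
    obtain ⟨q, hq, rfl⟩ := Finset.mem_image.mp (Finset.mem_coe.mp hh₂)
    apply hfulldet p hp q hq
    intro l hl
    exact congrFun hψeq ⟨l, hl⟩
  have hcardimg : (Sbad.image Hmap).card ≤ T.card :=
    Finset.card_le_card_of_injOn ψ hmaps hinj
  -- bound T.card in the reals
  have hTbound : (T.card : ℝ) ≤ (3 * (2:ℝ)^(k+1)) ^ L.card * (X:ℝ) ^ (w:ℕ) := by
    rw [hT, Fintype.card_piFinset]
    push_cast
    have hIccb : ∀ l : {l // l ∈ L},
        ((Finset.Icc (-(B l.1)) (B l.1)).card : ℝ) ≤ 3 * (2:ℝ)^(k+1) * (X:ℝ) ^ (l.1 : ℕ) := by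
      intro l
      have hXl : (1:ℤ) ≤ (X:ℤ) ^ (l.1:ℕ) := one_le_pow₀ (by exact_mod_cast hX)
      have hBpos : (1:ℤ) ≤ B l.1 := by
        rw [hB]
        calc (1:ℤ) ≤ 2^(k+1) := one_le_pow₀ (by norm_num)
          _ ≤ 2^(k+1) * (X:ℤ)^(l.1:ℕ) := le_mul_of_one_le_right (by positivity) hXl
      rw [Int.card_Icc]
      have heq : (B l.1 + 1 - -(B l.1)) = 2 * B l.1 + 1 := by ring
      rw [heq]
      have h0 : ((2 * B l.1 + 1).toNat : ℤ) = 2 * B l.1 + 1 :=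
        Int.toNat_of_nonneg (by linarith)
      have h1 : ((2 * B l.1 + 1).toNat : ℝ) = ((2 * B l.1 + 1 : ℤ) : ℝ) := by
        exact_mod_cast h0
      rw [h1]
      push_cast [hB]
      have hXlr : (1:ℝ) ≤ (X:ℝ) ^ (l.1:ℕ) := one_le_pow₀ hXr
      have h2 : (1:ℝ) ≤ (2:ℝ)^(k+1) * (X:ℝ)^(l.1:ℕ) := by
        calc (1:ℝ) ≤ (2:ℝ)^(k+1) := one_le_pow₀ (by norm_num)
          _ ≤ (2:ℝ)^(k+1) * (X:ℝ)^(l.1:ℕ) := le_mul_of_one_le_right (by positivity) hXlr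
      nlinarith [h2]
    calc ∏ l : {l // l ∈ L}, ((Finset.Icc (-(B l.1)) (B l.1)).card : ℝ)
        ≤ ∏ l : {l // l ∈ L}, (3 * (2:ℝ)^(k+1) * (X:ℝ) ^ (l.1:ℕ)) :=
          Finset.prod_le_prod (fun _ _ => by positivity) (fun l _ => hIccb l)
      _ = (3 * (2:ℝ)^(k+1)) ^ L.card * (X:ℝ) ^ (w:ℕ) := by
          rw [Finset.prod_mul_distrib, Finset.prod_const, Finset.card_univ, Fintype.card_coe]
          congr 1
          rw [Finset.prod_coe_sort_eq_attach, Finset.prod_attach L (fun l => (X:ℝ) ^ l),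
            Finset.prod_pow_eq_pow_sum, hwdef]
  -- sum over fibers
  have hfibcard : ∀ h ∈ Sbad.image Hmap,
      ((Sbad.filter fun p => Hmap p = h).card : ℝ) ≤ C₁ * (X:ℝ) ^ ((1:ℝ) + ε) := by
    intro h hh
    refine le_trans ?_ (hC₁ X hX h (himg_ne h hh))
    exact_mod_cast Nat.cast_le.mpr (Finset.card_le_card (hfiber h))
  have hSbadcard : (Sbad.card : ℝ) ≤
      ((Sbad.image Hmap).card : ℝ) * (C₁ * (X:ℝ) ^ ((1:ℝ) + ε)) := by
    have h0 : Sbad.card = ∑ h ∈ Sbad.image Hmap, (Sbad.filter fun p => Hmap p = h).card :=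
      Finset.card_eq_sum_card_image Hmap Sbad
    calc (Sbad.card : ℝ)
        = ∑ h ∈ Sbad.image Hmap, ((Sbad.filter fun p => Hmap p = h).card : ℝ) := by
          rw [h0]; push_cast; rfl
      _ ≤ ∑ _h ∈ Sbad.image Hmap, C₁ * (X:ℝ) ^ ((1:ℝ) + ε) :=
          Finset.sum_le_sum hfibcard
      _ = ((Sbad.image Hmap).card : ℝ) * (C₁ * (X:ℝ) ^ ((1:ℝ) + ε)) := by
          rw [Finset.sum_const, nsmul_eq_mul]
  -- exponent bookkeeping
  have hwexp : (w:ℝ) = (k * (k + 1) : ℝ) / 2 - (∑ j, (kk j : ℝ)) := by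
    have hnat : (w + ∑ l ∈ K, l) * 2 = k * (k + 1) := by
      rw [hsumsplit]
      exact gauss_sum k
    have hKcast : ((∑ l ∈ K, l : ℕ) : ℝ) = ∑ j, (kk j : ℝ) := by
      rw [hsumK]; push_cast; rfl
    have hcast : ((w:ℝ) + ((∑ l ∈ K, l : ℕ) : ℝ)) * 2 = (k:ℝ) * ((k:ℝ) + 1) := by
      exact_mod_cast hnat
    rw [hKcast] at hcast
    linarith
  have hexp : (X:ℝ) ^ (w:ℕ) * (X:ℝ) ^ ((1:ℝ) + ε) =
      (X:ℝ) ^ ((k * (k + 1) : ℝ) / 2 - (∑ j, (kk j : ℝ)) + 1 + ε) := by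
    rw [← Real.rpow_natCast (X:ℝ) w, ← Real.rpow_add hXpos]
    congr 1
    rw [hwexp]
    ring
  -- final calculation
  have hfinal : (Sbad.card : ℝ) ≤
      Cbig * (X:ℝ) ^ ((k * (k + 1) : ℝ) / 2 - (∑ j, (kk j : ℝ)) + 1 + ε) := by
    calc (Sbad.card : ℝ)
        ≤ ((Sbad.image Hmap).card : ℝ) * (C₁ * (X:ℝ) ^ ((1:ℝ) + ε)) := hSbadcard
      _ ≤ ((3 * (2:ℝ)^(k+1)) ^ L.card * (X:ℝ) ^ (w:ℕ)) * (C₁ * (X:ℝ) ^ ((1:ℝ) + ε)) := by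
          apply mul_le_mul_of_nonneg_right _ (by positivity)
          exact le_trans (by exact_mod_cast hcardimg) hTbound
      _ = Cbig * ((X:ℝ) ^ (w:ℕ) * (X:ℝ) ^ ((1:ℝ) + ε)) := by
          rw [hCbigdef]; ring
      _ = Cbig * (X:ℝ) ^ ((k * (k + 1) : ℝ) / 2 - (∑ j, (kk j : ℝ)) + 1 + ε) := by
          rw [hexp]
  rw [Real.norm_eq_abs, Real.norm_eq_abs, abs_of_nonneg (Nat.cast_nonneg _),
    abs_of_nonneg (Real.rpow_nonneg (le_of_lt hXpos) _)]
  exact hfinal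
end

section
/- Let φ_1,…,φ_r be symmetric polynomials of the shape φ_j(z) = a_j σ_{k_j}(z) − Σ_{l < k_j, l ∈ R} b_{jl} σ_l(z) with a_j nonzero integers and b_{jl} integers. Suppose x, y ∈ ℤ^k satisfy φ_j(x) = φ_j(y) for 1 ≤ j ≤ r, and set h_l = σ_l(x) − σ_l(y) for l ∈ R. Then one has the polynomial identity in t: A·(∏_{i=1}^k (t + x_i) − ∏_{i=1}^k (t + y_i)) = Ψ(t;h). -/
open Finset Asymptotics Filter

/-- The complementary set of exponents `ℛ = {1,…,k} \ {k_1,…,k_r}`. -/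
def compSet (k r : ℕ) (kk : Fin r → ℕ) : Finset ℕ :=
  Finset.Icc 1 k \ Finset.image kk Finset.univ

/-- The auxiliary polynomial `Ψ(t; h) = Σ_{l∈ℛ} h_l ψ_l(t)`, where
`ψ_l(t) = A t^{k−l} + Σ_{j : k_j > l} c_j b_{jl} t^{k−k_j}`, `A = a_1 ⋯ a_r` and
`c_j = A / a_j`. -/
def Psi (k r : ℕ) (kk : Fin r → ℕ) (a : Fin r → ℤ) (b : Fin r → ℕ → ℤ)
    (h : ℕ → ℤ) (t : ℤ) : ℤ :=
  ∑ l ∈ compSet k r kk, h l *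
    ((∏ j, a j) * t ^ (k - l) +
      ∑ j ∈ Finset.univ.filter (fun j => l < kk j),
        (∏ i ∈ Finset.univ.erase j, a i) * b j l * t ^ (k - kk j))

lemma prod_add_esymm (k : ℕ) (x : Fin k → ℤ) (t : ℤ) :
    (∏ i, (t + x i)) = ∑ l ∈ Finset.range (k + 1), esymm k l x * t ^ (k - l) := by
  have h1 : ∀ i ∈ (univ : Finset (Fin k)), t + x i = x i + t := fun i _ => add_comm _ _
  rw [Finset.prod_congr rfl h1, Finset.prod_add, Finset.sum_powerset]
  rw [Finset.card_univ, Fintype.card_fin]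
  refine Finset.sum_congr rfl fun l hl => ?_
  rw [esymm, Finset.sum_mul]
  refine Finset.sum_congr rfl fun s hs => ?_
  rw [Finset.prod_const]
  congr 2
  rw [Finset.card_sdiff_of_subset (Finset.subset_univ s), Finset.card_univ, Fintype.card_fin,
    (Finset.mem_powersetCard.mp hs).2]

/-- The identity (2.7). If `x, y ∈ ℤ^k` satisfy `φ_j(x) = φ_j(y)` for `1 ≤ j ≤ r`, where
`φ_j(z) = a_j σ_{k_j}(z) − Σ_{l < k_j, l ∈ ℛ} b_{jl} σ_l(z)`, and `h_l = σ_l(x) − σ_l(y)`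
for `l ∈ ℛ`, then `A (∏_{i=1}^k (t + x_i) − ∏_{i=1}^k (t + y_i)) = Ψ(t;h)` identically in
`t`. -/
theorem multiplicative_relation_identity (k r : ℕ) (hr : 0 < r) (kk : Fin r → ℕ)
    (hmono : StrictMono kk) (hfirst : 1 ≤ kk ⟨0, hr⟩)
    (hlast : kk ⟨r - 1, Nat.sub_lt hr Nat.one_pos⟩ = k)
    (a : Fin r → ℤ) (ha : ∀ j, a j ≠ 0) (b : Fin r → ℕ → ℤ)
    (x y : Fin k → ℤ)
    (heq : ∀ j,
      a j * esymm k (kk j) x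
          - ∑ l ∈ (compSet k r kk).filter (fun l => l < kk j), b j l * esymm k l x =
        a j * esymm k (kk j) y
          - ∑ l ∈ (compSet k r kk).filter (fun l => l < kk j), b j l * esymm k l y)
    (h : ℕ → ℤ) (hh : ∀ l ∈ compSet k r kk, h l = esymm k l x - esymm k l y) :
    ∀ t : ℤ,
      (∏ j, a j) * ((∏ i, (t + x i)) - ∏ i, (t + y i)) = Psi k r kk a b h t := by
  intro t
  set A := ∏ j, a j with hA
  set d : ℕ → ℤ := fun l => esymm k l x - esymm k l y with hd
  -- image of kk is contained in Icc 1 k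
  have himg : Finset.image kk Finset.univ ⊆ Finset.Icc 1 k := by
    intro m hm
    obtain ⟨j, _, rfl⟩ := Finset.mem_image.mp hm
    refine Finset.mem_Icc.mpr ⟨le_trans hfirst (hmono.monotone (by
      exact Fin.mk_le_of_le_val (Nat.zero_le _))), ?_⟩
    rw [← hlast]
    exact hmono.monotone (by exact (Fin.le_def).mpr (Nat.le_sub_one_of_lt j.isLt))
  -- difference expansion
  have hdiff : (∏ i, (t + x i)) - ∏ i, (t + y i)
      = ∑ l ∈ Finset.Icc 1 k, d l * t ^ (k - l) := by
    rw [prod_add_esymm, prod_add_esymm, ← Finset.sum_sub_distrib]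
    have hk1 : 1 ≤ k := by
      rw [← hlast]; exact le_trans hfirst (hmono.monotone (Fin.le_def.mpr (Nat.zero_le _)))
    have : Finset.range (k + 1) = insert 0 (Finset.Icc 1 k) := by
      ext m
      simp only [Finset.mem_range, Finset.mem_insert, Finset.mem_Icc]
      omega
    rw [this, Finset.sum_insert (by simp)]
    have h0 : esymm k 0 x = 1 := by simp [esymm]
    have h0' : esymm k 0 y = 1 := by simp [esymm]
    rw [h0, h0']
    simp only [sub_self, zero_add]
    refine Finset.sum_congr rfl fun l hl => ?_
    rw [hd]; ring
  rw [hdiff, Finset.mul_sum]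
  -- split Icc into compSet and image
  have hsplit : ∑ l ∈ Finset.Icc 1 k, A * (d l * t ^ (k - l))
      = (∑ l ∈ compSet k r kk, A * (d l * t ^ (k - l)))
        + ∑ l ∈ Finset.image kk Finset.univ, A * (d l * t ^ (k - l)) := by
    rw [compSet, Finset.sum_sdiff himg]
  rw [hsplit]
  -- sum over image = sum over j
  rw [Finset.sum_image (fun i _ j _ hij => hmono.injective hij)]
  -- key identity for each j
  have key : ∀ j, A * (d (kk j) * t ^ (k - kk j))
      = ∑ l ∈ (compSet k r kk).filter (fun l => l < kk j),
          h l * ((∏ i ∈ Finset.univ.erase j, a i) * b j l * t ^ (k - kk j)) := by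
    intro j
    have hj : a j * d (kk j)
        = ∑ l ∈ (compSet k r kk).filter (fun l => l < kk j), b j l * h l := by
      have := heq j
      have h2 : a j * esymm k (kk j) x - a j * esymm k (kk j) y
          = (∑ l ∈ (compSet k r kk).filter (fun l => l < kk j), b j l * esymm k l x)
            - ∑ l ∈ (compSet k r kk).filter (fun l => l < kk j), b j l * esymm k l y := by
        linarith [this]
      rw [hd]
      rw [mul_sub, h2, ← Finset.sum_sub_distrib]
      refine Finset.sum_congr rfl fun l hl => ?_
      rw [hh l (Finset.mem_filter.mp hl).1]; ring
    have hAe : A = a j * ∏ i ∈ Finset.univ.erase j, a i :=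
      (Finset.mul_prod_erase Finset.univ a (Finset.mem_univ j)).symm
    calc A * (d (kk j) * t ^ (k - kk j))
        = (∏ i ∈ Finset.univ.erase j, a i) * (a j * d (kk j)) * t ^ (k - kk j) := by
          rw [hAe]; ring
      _ = (∏ i ∈ Finset.univ.erase j, a i)
            * (∑ l ∈ (compSet k r kk).filter (fun l => l < kk j), b j l * h l)
            * t ^ (k - kk j) := by rw [hj]
      _ = _ := by
          rw [Finset.mul_sum, Finset.sum_mul]
          refine Finset.sum_congr rfl fun l hl => ?_
          ring
  rw [Finset.sum_congr rfl (fun j _ => key j)]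
  -- now compare with Psi
  rw [Psi]
  simp only [mul_add, Finset.mul_sum]
  rw [Finset.sum_add_distrib]
  congr 1
  · refine Finset.sum_congr rfl fun l hl => ?_
    rw [hh l hl, hd]; ring
  · -- swap double sums
    exact (Finset.sum_comm' (fun j l => by
      simp only [Finset.mem_univ, Finset.mem_filter, true_and, and_comm])).symm
end

section
/- Let φ_1,…,φ_r be symmetric polynomials of the shape φ_j(z) = a_j σ_{k_j}(z) − Σ_{l < k_j, l ∈ R} b_{jl} σ_l(z) with a_j nonzero integers and b_{jl} integers. Suppose x, y ∈ ℤ^k satisfy φ_j(x) = φ_j(y) for 1 ≤ j ≤ r, set h_l = σ_l(x) − σ_l(y) for l ∈ R, and suppose that Ψ(t;h) is identically zero as a polynomial in t. Then (x_1,…,x_k) is a permutation of (y_1,…,y_k). -/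
open Finset Asymptotics Filter

section Aux
open Polynomial

theorem perm_of_ofFn_perm {k : ℕ} {x y : Fin k → ℤ}
    (hp : (List.ofFn x).Perm (List.ofFn y)) : ∃ π : Equiv.Perm (Fin k), x = y ∘ π := by
  have hmx := Tuple.monotone_sort x
  have hmy := Tuple.monotone_sort y
  have hperm : (List.ofFn (x ∘ Tuple.sort x)).Perm (List.ofFn (y ∘ Tuple.sort y)) :=
    ((Tuple.sort x).ofFn_comp_perm x).trans (hp.trans ((Tuple.sort y).ofFn_comp_perm y).symm)
  have heq : x ∘ Tuple.sort x = y ∘ Tuple.sort y :=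
    List.ofFn_injective (hperm.eq_of_sortedLE hmx.sortedLE_ofFn hmy.sortedLE_ofFn)
  refine ⟨(Tuple.sort x).symm.trans (Tuple.sort y), ?_⟩
  funext i
  have := congrFun heq ((Tuple.sort x).symm i)
  simpa using this

-- Vieta evaluation

theorem prod_add_eq_sum_esymm {k : ℕ} (x : Fin k → ℤ) (t : ℤ) :
    ∏ i, (t + x i) = ∑ l ∈ Finset.range (k + 1), esymm k l x * t ^ (k - l) := by
  have := Finset.prod_add x (fun _ => t) (Finset.univ : Finset (Fin k))
  simp only [add_comm t] at this ⊢
  rw [this, Finset.sum_powerset]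
  simp only [Finset.card_univ, Fintype.card_fin]
  refine Finset.sum_congr rfl fun l hl => ?_
  rw [esymm, Finset.sum_mul]
  refine Finset.sum_congr rfl fun s hs => ?_
  rw [Finset.mem_powersetCard] at hs
  rw [Finset.prod_const, Finset.card_sdiff_of_subset hs.1, Finset.card_univ, Fintype.card_fin, hs.2]


theorem perm_of_prod_eq {k : ℕ} (x y : Fin k → ℤ)
    (hprod : ∀ t : ℤ, ∏ i, (t + x i) = ∏ i, (t + y i)) :
    (List.ofFn x).Perm (List.ofFn y) := by
  have hpq : (∏ i, (X + C (x i)) : ℤ[X]) = ∏ i, (X + C (y i)) := by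
    apply Polynomial.funext
    intro t
    simpa [Polynomial.eval_prod] using hprod t
  have hx : (∏ i, (X + C (x i)) : ℤ[X]) =
      ((Multiset.map (fun i => -x i) (Finset.univ : Finset (Fin k)).val).map
        (fun a => X - C a)).prod := by
    rw [Multiset.map_map]
    rw [Finset.prod_eq_multiset_prod]
    congr 1
    apply Multiset.map_congr rfl
    intro i _
    simp [sub_neg_eq_add]
  have hy : (∏ i, (X + C (y i)) : ℤ[X]) =
      ((Multiset.map (fun i => -y i) (Finset.univ : Finset (Fin k)).val).map
        (fun a => X - C a)).prod := by
    rw [Multiset.map_map, Finset.prod_eq_multiset_prod]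
    congr 1
    apply Multiset.map_congr rfl
    intro i _
    simp [sub_neg_eq_add]
  have hroots : Multiset.map (fun i => -x i) (Finset.univ : Finset (Fin k)).val =
      Multiset.map (fun i => -y i) (Finset.univ : Finset (Fin k)).val := by
    have := congrArg Polynomial.roots (hx.symm.trans (hpq.trans hy))
    rwa [Polynomial.roots_multiset_prod_X_sub_C, Polynomial.roots_multiset_prod_X_sub_C] at this
  have hm : Multiset.map x (Finset.univ : Finset (Fin k)).val =
      Multiset.map y (Finset.univ : Finset (Fin k)).val := by
    have := congrArg (Multiset.map (fun z : ℤ => -z)) hroots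
    simpa only [Multiset.map_map, Function.comp, neg_neg] using this
  rw [Fin.univ_val_map, Fin.univ_val_map] at hm
  exact Multiset.coe_eq_coe.mp hm

theorem Psi_swap (k r : ℕ) (kk : Fin r → ℕ) (a : Fin r → ℤ) (b : Fin r → ℕ → ℤ)
    (h : ℕ → ℤ) (t : ℤ) :
    Psi k r kk a b h t =
      (∑ l ∈ compSet k r kk, (∏ j, a j) * h l * t ^ (k - l)) +
      ∑ j, (∏ i ∈ Finset.univ.erase j, a i) *
        (∑ l ∈ (compSet k r kk).filter (fun l => l < kk j), b j l * h l) * t ^ (k - kk j) := by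
  unfold Psi
  simp only [mul_add, Finset.mul_sum, Finset.sum_add_distrib]
  congr 1
  · exact Finset.sum_congr rfl fun l _ => by ring
  · rw [Finset.sum_comm' (s := compSet k r kk) (t' := Finset.univ)
      (t := fun l => Finset.univ.filter (fun j => l < kk j))
      (s' := fun j => (compSet k r kk).filter (fun l => l < kk j))
      (f := fun l j => h l * ((∏ i ∈ Finset.univ.erase j, a i) * b j l * t ^ (k - kk j)))
      (by intro l j; simp [and_comm])]
    simp only [Finset.sum_mul, Finset.mul_sum]
    exact Finset.sum_congr rfl fun j _ => Finset.sum_congr rfl fun l _ => by ring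


theorem key_prod_eq (k r : ℕ) (hr : 0 < r) (kk : Fin r → ℕ)
    (hmono : StrictMono kk) (hfirst : 1 ≤ kk ⟨0, hr⟩)
    (hlast : kk ⟨r - 1, Nat.sub_lt hr Nat.one_pos⟩ = k)
    (a : Fin r → ℤ) (ha : ∀ j, a j ≠ 0) (b : Fin r → ℕ → ℤ)
    (x y : Fin k → ℤ)
    (heq : ∀ j,
      a j * esymm k (kk j) x
          - ∑ l ∈ (compSet k r kk).filter (fun l => l < kk j), b j l * esymm k l x =
        a j * esymm k (kk j) y
          - ∑ l ∈ (compSet k r kk).filter (fun l => l < kk j), b j l * esymm k l y)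
    (h : ℕ → ℤ) (hh : ∀ l ∈ compSet k r kk, h l = esymm k l x - esymm k l y)
    (hzero : ∀ t : ℤ, Psi k r kk a b h t = 0) (t : ℤ) :
    ∏ i, (t + x i) = ∏ i, (t + y i) := by
  set d : ℕ → ℤ := fun l => esymm k l x - esymm k l y with hd
  set A : ℤ := ∏ j, a j with hA
  have hAne : A ≠ 0 := Finset.prod_ne_zero_iff.mpr fun j _ => ha j
  -- image kk ⊆ Icc 1 k
  have hK : Finset.image kk Finset.univ ⊆ Finset.Icc 1 k := by
    intro m hm
    rw [Finset.mem_image] at hm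
    obtain ⟨j, -, rfl⟩ := hm
    rw [Finset.mem_Icc]
    constructor
    · exact le_trans hfirst (hmono.monotone (by simp [Fin.le_def]))
    · rw [← hlast]
      exact hmono.monotone (by simp [Fin.le_def]; omega)
  -- per-j identity
  have hdk : ∀ j, A * d (kk j) = (∏ i ∈ Finset.univ.erase j, a i) *
      ∑ l ∈ (compSet k r kk).filter (fun l => l < kk j), b j l * h l := by
    intro j
    have h1 : a j * d (kk j) =
        ∑ l ∈ (compSet k r kk).filter (fun l => l < kk j), b j l * h l := by
      have h2 := heq j
      have h3 : ∀ l ∈ (compSet k r kk).filter (fun l => l < kk j),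
          b j l * h l = b j l * esymm k l x - b j l * esymm k l y := by
        intro l hl
        rw [hh l (Finset.mem_of_mem_filter l hl)]
        ring
      rw [Finset.sum_congr rfl h3, Finset.sum_sub_distrib]
      simp only [hd]
      linarith
    calc A * d (kk j) = (∏ i ∈ Finset.univ.erase j, a i) * (a j * d (kk j)) := by
          rw [hA, ← Finset.mul_prod_erase Finset.univ a (Finset.mem_univ j)]; ring
      _ = _ := by rw [h1]
  -- main computation
  have hmain : A * ((∏ i, (t + x i)) - ∏ i, (t + y i)) = Psi k r kk a b h t := by
    rw [prod_add_eq_sum_esymm, prod_add_eq_sum_esymm, ← Finset.sum_sub_distrib]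
    have hsum : ∀ l, esymm k l x * t ^ (k - l) - esymm k l y * t ^ (k - l)
        = d l * t ^ (k - l) := fun l => by rw [hd]; ring
    rw [Finset.sum_congr rfl fun l _ => hsum l]
    have hrange : Finset.range (k + 1) = insert 0 (Finset.Icc 1 k) := by
      ext m; simp; omega
    have h0 : d 0 = 0 := by
      simp [hd, esymm]
    rw [hrange, Finset.sum_insert (by simp), h0, zero_mul, zero_add]
    have hsplit : Finset.Icc 1 k = compSet k r kk ∪ Finset.image kk Finset.univ := by
      rw [compSet, Finset.sdiff_union_of_subset hK]
    have hdisj : Disjoint (compSet k r kk) (Finset.image kk Finset.univ) :=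
      Finset.sdiff_disjoint
    rw [hsplit, Finset.sum_union hdisj, mul_add]
    rw [Finset.sum_image (fun i _ j _ hij => hmono.injective hij)]
    rw [Psi_swap]
    congr 1
    · rw [Finset.mul_sum]
      refine Finset.sum_congr rfl fun l hl => ?_
      rw [hh l hl]
      simp only [hd]
      ring
    · rw [Finset.mul_sum]
      refine Finset.sum_congr rfl fun j _ => ?_
      rw [← mul_assoc, ← hdk j]
  have := hzero t
  rw [← hmain] at this
  have := mul_eq_zero.mp this
  rcases this with h' | h'
  · exact absurd h' hAne
  · linarith

end Aux

/-- If `x, y ∈ ℤ^k` satisfy `φ_j(x) = φ_j(y)` for `1 ≤ j ≤ r`, where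
`φ_j(z) = a_j σ_{k_j}(z) − Σ_{l < k_j, l ∈ ℛ} b_{jl} σ_l(z)`, with
`h_l = σ_l(x) − σ_l(y)` for `l ∈ ℛ`, and if `Ψ(t;h)` vanishes identically as a polynomial
in `t`, then `(x_1,…,x_k)` is a permutation of `(y_1,…,y_k)`. -/
theorem perm_of_Psi_vanishing (k r : ℕ) (hr : 0 < r) (kk : Fin r → ℕ)
    (hmono : StrictMono kk) (hfirst : 1 ≤ kk ⟨0, hr⟩)
    (hlast : kk ⟨r - 1, Nat.sub_lt hr Nat.one_pos⟩ = k)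
    (a : Fin r → ℤ) (ha : ∀ j, a j ≠ 0) (b : Fin r → ℕ → ℤ)
    (x y : Fin k → ℤ)
    (heq : ∀ j,
      a j * esymm k (kk j) x
          - ∑ l ∈ (compSet k r kk).filter (fun l => l < kk j), b j l * esymm k l x =
        a j * esymm k (kk j) y
          - ∑ l ∈ (compSet k r kk).filter (fun l => l < kk j), b j l * esymm k l y)
    (h : ℕ → ℤ) (hh : ∀ l ∈ compSet k r kk, h l = esymm k l x - esymm k l y)
    (hzero : ∀ t : ℤ, Psi k r kk a b h t = 0) :
    ∃ π : Equiv.Perm (Fin k), x = y ∘ π := by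
  have hprod := key_prod_eq k r hr kk hmono hfirst hlast a ha b x y heq h hh hzero
  exact perm_of_ofFn_perm (perm_of_prod_eq x y hprod)
end

section
/- Let φ_1,…,φ_r be symmetric polynomials of the shape φ_j(z) = a_j σ_{k_j}(z) − Σ_{l < k_j, l ∈ R} b_{jl} σ_l(z) with a_j nonzero integers and b_{jl} integers, with degrees k_1,…,k_r satisfying 1 ≤ k_1 < k_2 < … < k_r = k. Let T_k^*(X;φ) denote the number of pairs (x,y) with 1 ≤ x_i, y_i ≤ X satisfying φ_j(x) = φ_j(y) (1 ≤ j ≤ r), for which {x_1,…,x_k} = {y_1,…,y_k} as sets but (y_1,…,y_k) is not a permutation of (x_1,…,x_k). Then for each ε > 0, T_k^*(X;φ) ≪ X^{w(φ)+ε}. -/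
open Finset Asymptotics Filter

/-! ### Auxiliary material -/

lemma pdb_esymm_zero (k : ℕ) (x : Fin k → ℤ) : esymm k 0 x = 1 := by simp [esymm]

lemma pdb_esymm_abs_le (k l N : ℕ) (x : Fin k → ℤ) (hx : ∀ i, 1 ≤ x i ∧ x i ≤ (N : ℤ)) :
    |esymm k l x| ≤ 2 ^ k * (N : ℤ) ^ l := by
  have h1 : |esymm k l x| ≤
      ∑ s ∈ Finset.powersetCard l (Finset.univ : Finset (Fin k)), (N : ℤ) ^ l := by
    refine (Finset.abs_sum_le_sum_abs _ _).trans (Finset.sum_le_sum fun s hs => ?_)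
    rw [Finset.abs_prod]
    have hcard : s.card = l := (Finset.mem_powersetCard.mp hs).2
    calc ∏ i ∈ s, |x i| ≤ ∏ i ∈ s, (N : ℤ) := by
          refine Finset.prod_le_prod (fun i _ => abs_nonneg _) fun i _ => ?_
          rw [abs_of_pos (lt_of_lt_of_le one_pos (hx i).1)]
          exact (hx i).2
      _ = (N : ℤ) ^ l := by rw [Finset.prod_const, hcard]
  rw [Finset.sum_const, Finset.card_powersetCard, Finset.card_univ, Fintype.card_fin,
    nsmul_eq_mul] at h1
  refine h1.trans (mul_le_mul_of_nonneg_right ?_ (pow_nonneg (by positivity) _))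
  have : k.choose l ≤ 2 ^ k := by
    rcases le_or_gt l k with h | h
    · calc k.choose l ≤ ∑ i ∈ Finset.range (k + 1), k.choose i :=
          Finset.single_le_sum (fun i _ => Nat.zero_le _)
            (Finset.mem_range.mpr (Nat.lt_succ_of_le h))
      _ = 2 ^ k := Nat.sum_range_choose k
    · rw [Nat.choose_eq_zero_of_lt h]; positivity
  exact_mod_cast this

lemma pdb_exists_perm_of_multiset_eq {k : ℕ} {x y : Fin k → ℤ}
    (h : Multiset.map x (Finset.univ.val : Multiset (Fin k)) = Multiset.map y Finset.univ.val) :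
    ∃ π : Equiv.Perm (Fin k), y = x ∘ π := by
  have hofn : ∀ f : Fin k → ℤ,
      Multiset.map f (Finset.univ.val : Multiset (Fin k)) = (List.ofFn f : Multiset ℤ) := by
    intro f; simp
  rw [hofn, hofn] at h
  have hperm : (List.ofFn x).Perm (List.ofFn y) := Multiset.coe_eq_coe.mp h
  set σ := Tuple.sort x with hσ
  set τ := Tuple.sort y with hτ
  have hxs : Monotone (x ∘ σ) := Tuple.monotone_sort x
  have hys : Monotone (y ∘ τ) := Tuple.monotone_sort y
  have hp : (List.ofFn (x ∘ σ)).Perm (List.ofFn (y ∘ τ)) :=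
    (σ.ofFn_comp_perm x).trans (hperm.trans (τ.ofFn_comp_perm y).symm)
  have heq : x ∘ σ = y ∘ τ :=
    List.ofFn_injective (List.Perm.eq_of_sortedLE hxs.sortedLE_ofFn hys.sortedLE_ofFn hp)
  refine ⟨τ.symm.trans σ, funext fun i => ?_⟩
  have := congrFun heq (τ.symm i)
  simpa using this.symm

/-- The polynomial `∏ᵢ (X + xᵢ)`. -/
noncomputable def pdbP (k : ℕ) (x : Fin k → ℤ) : Polynomial ℤ :=
  ∏ i : Fin k, (Polynomial.X + Polynomial.C (x i))

open Polynomial in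
lemma pdbP_eq_sum (k : ℕ) (x : Fin k → ℤ) :
    pdbP k x = ∑ l ∈ Finset.range (k + 1), C (esymm k l x) * X ^ (k - l) := by
  have h := Multiset.prod_X_add_C_eq_sum_esymm ((Finset.univ.val : Multiset (Fin k)).map x)
  rw [Multiset.map_map] at h
  have hc : Multiset.card ((Finset.univ.val : Multiset (Fin k)).map x) = k := by simp
  rw [hc] at h
  rw [pdbP, Finset.prod_eq_multiset_prod]
  convert h using 2 with l hl
  · rfl
  · rfl
  rw [Finset.esymm_map_val]
  rfl

open Polynomial in
lemma pdbP_roots (k : ℕ) (x : Fin k → ℤ) :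
    (pdbP k x).roots = (Finset.univ.val : Multiset (Fin k)).map (fun i => -x i) := by
  have hne : (∏ i : Fin k, (X + C (x i))) ≠ 0 :=
    Finset.prod_ne_zero_iff.mpr fun i _ => (monic_X_add_C (x i)).ne_zero
  rw [pdbP, Polynomial.roots_prod _ _ hne]
  have hs : ∀ a : ℤ, (X + C a).roots = {-a} := by
    intro a
    rw [show (X + C a : ℤ[X]) = X - C (-a) by rw [map_neg, sub_neg_eq_add], roots_X_sub_C]
  simp only [hs, Multiset.bind_singleton]

lemma pdbP_inj {k : ℕ} {x y : Fin k → ℤ} (h : pdbP k x = pdbP k y) :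
    ∃ π : Equiv.Perm (Fin k), y = x ∘ π := by
  have h1 := congrArg Polynomial.roots h
  rw [pdbP_roots, pdbP_roots] at h1
  have h2 := congrArg (Multiset.map (fun t : ℤ => -t)) h1
  simp only [Multiset.map_map, Function.comp] at h2
  simp only [neg_neg] at h2
  exact pdb_exists_perm_of_multiset_eq h2

open Polynomial in
lemma pdbP_eval {k : ℕ} {x : Fin k → ℤ} {z : ℤ} (hz : z ∈ Set.range x) :
    (pdbP k x).eval (-z) = 0 := by
  obtain ⟨i, hi⟩ := hz
  rw [pdbP, Polynomial.eval_prod]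
  exact Finset.prod_eq_zero (Finset.mem_univ i) (by simp [hi])

lemma pdb_range_split (k : ℕ) : Finset.range (k + 1) = insert 0 (Finset.Icc 1 k) := by
  ext n; simp [Nat.lt_succ_iff]; omega

open Polynomial in
lemma pdb_gid (k : ℕ) (x y : Fin k → ℤ) :
    (∑ l ∈ Finset.Icc 1 k, C (esymm k l x - esymm k l y) * X ^ (k - l)) =
      pdbP k x - pdbP k y := by
  rw [pdbP_eq_sum, pdbP_eq_sum, ← Finset.sum_sub_distrib]
  simp_rw [← sub_mul, ← Polynomial.C_sub]
  rw [pdb_range_split, Finset.sum_insert (by simp)]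
  rw [pdb_esymm_zero, pdb_esymm_zero]
  simp

open Polynomial in
lemma pdb_deg (k : ℕ) (x y : Fin k → ℤ) : (pdbP k x - pdbP k y).natDegree ≤ k - 1 := by
  rw [← pdb_gid]
  refine Polynomial.natDegree_sum_le_of_forall_le _ _ fun l hl => ?_
  refine (Polynomial.natDegree_C_mul_X_pow_le _ _).trans ?_
  exact Nat.sub_le_sub_left (Finset.mem_Icc.mp hl).1 k

/-- The sorted list of roots of `∏ (X + xᵢ) - ∏ (X + yᵢ)`. -/
noncomputable def pdbL (k : ℕ) (x y : Fin k → ℤ) : List ℤ :=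
  (pdbP k x - pdbP k y).roots.toFinset.sort (· ≤ ·)

lemma pdbL_length {k : ℕ} (hk : 0 < k) (x y : Fin k → ℤ) : (pdbL k x y).length < k := by
  rw [pdbL, Finset.length_sort]
  calc (pdbP k x - pdbP k y).roots.toFinset.card
      ≤ Multiset.card (pdbP k x - pdbP k y).roots := Multiset.toFinset_card_le _
    _ ≤ (pdbP k x - pdbP k y).natDegree := Polynomial.card_roots' _
    _ ≤ k - 1 := pdb_deg k x y
    _ < k := Nat.sub_lt hk Nat.one_pos

lemma pdbL_mem {k : ℕ} {x y : Fin k → ℤ} (hne : pdbP k x - pdbP k y ≠ 0)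
    (hr : Set.range x = Set.range y) {z : ℤ} (hz : z ∈ Set.range x) : -z ∈ pdbL k x y := by
  rw [pdbL, Finset.mem_sort, Multiset.mem_toFinset, Polynomial.mem_roots hne]
  show (pdbP k x - pdbP k y).eval (-z) = 0
  rw [Polynomial.eval_sub, pdbP_eval hz, pdbP_eval (hr ▸ hz), sub_zero]

/-- The bound used for the entries `σ_l(x) - σ_l(y)`. -/
def pdbB (k N l : ℕ) : ℤ := 2 ^ (k + 1) * (N : ℤ) ^ l

lemma pdb_card_Icc_le (k N l : ℕ) (hN : 1 ≤ N) :
    (Finset.Icc (-(pdbB k N l)) (pdbB k N l)).card ≤ 2 ^ (k + 3) * N ^ l := by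
  rw [Int.card_Icc]
  refine Int.toNat_le.mpr ?_
  have h1 : (1 : ℤ) ≤ (N : ℤ) ^ l := by
    have hN' : (1 : ℤ) ≤ (N : ℤ) := by exact_mod_cast hN
    calc (1 : ℤ) = 1 ^ l := (one_pow l).symm
      _ ≤ (N : ℤ) ^ l := pow_le_pow_left₀ (by norm_num) hN' l
  have h2 : ((2 : ℤ)) ^ (k + 3) = 8 * 2 ^ k := by rw [pow_add]; ring
  have h3 : (0 : ℤ) < 2 ^ k := by positivity
  rw [pdbB]
  push_cast
  rw [pow_succ, h2]
  nlinarith [h1, h3]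

lemma pdb_mem_Icc (k N l : ℕ) (x y : Fin k → ℤ) (hx : ∀ i, 1 ≤ x i ∧ x i ≤ (N : ℤ))
    (hy : ∀ i, 1 ≤ y i ∧ y i ≤ (N : ℤ)) :
    esymm k l x - esymm k l y ∈ Finset.Icc (-(pdbB k N l)) (pdbB k N l) := by
  have h1 := pdb_esymm_abs_le k l N x hx
  have h2 := pdb_esymm_abs_le k l N y hy
  have habs : |esymm k l x - esymm k l y| ≤ pdbB k N l := by
    rw [pdbB]
    calc |esymm k l x - esymm k l y| = |esymm k l x + -(esymm k l y)| := by rw [sub_eq_add_neg]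
      _ ≤ |esymm k l x| + |-(esymm k l y)| := abs_add_le _ _
      _ = |esymm k l x| + |esymm k l y| := by rw [abs_neg]
      _ ≤ 2 ^ k * (N : ℤ) ^ l + 2 ^ k * (N : ℤ) ^ l := add_le_add h1 h2
      _ = 2 ^ (k + 1) * (N : ℤ) ^ l := by rw [pow_succ]; ring
  exact Finset.mem_Icc.mpr (abs_le.mp habs)

/-- The key counting bound: the number of "potentially diagonal" pairs is at most a
constant times `N ^ (∑_{l ∈ ℛ} l)`. -/
theorem pdb_main (k r N : ℕ) (hk : 0 < k) (hN : 1 ≤ N) (kk : Fin r → ℕ)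
    (a : Fin r → ℤ) (ha : ∀ j, a j ≠ 0) (b : Fin r → ℕ → ℤ)
    (φ : Fin r → (Fin k → ℤ) → ℤ)
    (hφ : ∀ j z, φ j z =
      a j * esymm k (kk j) z
        - ∑ l ∈ (compSet k r kk).filter (fun l => l < kk j), b j l * esymm k l z) :
    pairCount k N (fun x y => (∀ j, φ j x = φ j y) ∧ Set.range x = Set.range y ∧
        ¬ ∃ π : Equiv.Perm (Fin k), y = x ∘ π)
      ≤ 2 ^ ((k + 3) * k) * Fintype.card (Fin k → Fin k) * Fintype.card (Fin k → Fin k)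
          * N ^ (∑ l ∈ compSet k r kk, l) := by
  classical
  unfold pairCount
  set R : Finset ℕ := compSet k r kk with hRdef
  set T1 : Finset ({l // l ∈ R} → ℤ) :=
    Fintype.piFinset (fun l : {l // l ∈ R} => Finset.Icc (-(pdbB k N (l : ℕ))) (pdbB k N (l : ℕ)))
    with hT1def
  set T : Finset (({l // l ∈ R} → ℤ) × (Fin k → Fin k) × (Fin k → Fin k)) :=
    T1 ×ˢ ((Finset.univ : Finset (Fin k → Fin k)) ×ˢ Finset.univ) with hTdef
  -- basic facts about elements of the subtype
  have hne : ∀ x y : Fin k → ℤ, (¬ ∃ π : Equiv.Perm (Fin k), y = x ∘ π) →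
      pdbP k x - pdbP k y ≠ 0 := fun x y hnp h => hnp (pdbP_inj (sub_eq_zero.mp h))
  have hmemx : ∀ x y : Fin k → ℤ, Set.range x = Set.range y →
      (¬ ∃ π : Equiv.Perm (Fin k), y = x ∘ π) → ∀ i, -(x i) ∈ pdbL k x y :=
    fun x y hr hnp i => pdbL_mem (hne x y hnp) hr ⟨i, rfl⟩
  have hmemy : ∀ x y : Fin k → ℤ, Set.range x = Set.range y →
      (¬ ∃ π : Equiv.Perm (Fin k), y = x ∘ π) → ∀ i, -(y i) ∈ pdbL k x y := by
    intro x y hr hnp i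
    exact pdbL_mem (hne x y hnp) hr (hr.symm ▸ Set.mem_range_self i)
  have heq1 : ∀ x y : Fin k → ℤ, (∀ j, φ j x = φ j y) → ∀ j,
      a j * (esymm k (kk j) x - esymm k (kk j) y) =
        ∑ l' ∈ R.filter (fun l => l < kk j), b j l' * (esymm k l' x - esymm k l' y) := by
    intro x y hphi j
    have h := hphi j
    rw [hφ j x, hφ j y] at h
    simp only [mul_sub, Finset.sum_sub_distrib]
    linarith [h]
  -- the injection
  refine le_trans (Nat.card_le_card_of_injective (β := {t // t ∈ T})
    (fun p => ⟨(fun l => esymm k (l : ℕ) p.1.1 - esymm k (l : ℕ) p.1.2,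
      fun i => ⟨(pdbL k p.1.1 p.1.2).idxOf (-(p.1.1 i)),
        (List.idxOf_lt_length_iff.mpr
          (hmemx p.1.1 p.1.2 p.2.2.2.2.1 p.2.2.2.2.2 i)).trans (pdbL_length hk _ _)⟩,
      fun i => ⟨(pdbL k p.1.1 p.1.2).idxOf (-(p.1.2 i)),
        (List.idxOf_lt_length_iff.mpr
          (hmemy p.1.1 p.1.2 p.2.2.2.2.1 p.2.2.2.2.2 i)).trans (pdbL_length hk _ _)⟩),
      Finset.mem_product.mpr ⟨Fintype.mem_piFinset.mpr
          (fun l => pdb_mem_Icc k N (l : ℕ) p.1.1 p.1.2 p.2.1 p.2.2.1),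
        Finset.mem_product.mpr ⟨Finset.mem_univ _, Finset.mem_univ _⟩⟩⟩) ?_) ?_
  · -- injectivity
    intro p q hpq
    have h0 := congrArg Subtype.val hpq
    have h1 := congrArg Prod.fst h0
    have h2 := congrArg (fun t => t.2.1) h0
    have h3 := congrArg (fun t => t.2.2) h0
    simp only at h1 h2 h3
    have hdR : ∀ l : ℕ, l ∈ R →
        esymm k l p.1.1 - esymm k l p.1.2 = esymm k l q.1.1 - esymm k l q.1.2 :=
      fun l hl => congrFun h1 ⟨l, hl⟩
    have hd : ∀ l ∈ Finset.Icc 1 k,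
        esymm k l p.1.1 - esymm k l p.1.2 = esymm k l q.1.1 - esymm k l q.1.2 := by
      intro l hl
      by_cases hlR : l ∈ R
      · exact hdR l hlR
      · have himg : l ∈ Finset.image kk Finset.univ := by
          by_contra hno
          exact hlR (Finset.mem_sdiff.mpr ⟨hl, hno⟩)
        obtain ⟨j, _, hj⟩ := Finset.mem_image.mp himg
        subst hj
        have e1 := heq1 p.1.1 p.1.2 p.2.2.2.1 j
        have e2 := heq1 q.1.1 q.1.2 q.2.2.2.1 j
        have e3 : (∑ l' ∈ R.filter (fun l => l < kk j),
              b j l' * (esymm k l' p.1.1 - esymm k l' p.1.2)) =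
            ∑ l' ∈ R.filter (fun l => l < kk j),
              b j l' * (esymm k l' q.1.1 - esymm k l' q.1.2) :=
          Finset.sum_congr rfl fun l' hl' => by
            rw [hdR l' (Finset.mem_filter.mp hl').1]
        exact mul_left_cancel₀ (ha j) (e1.trans (e3.trans e2.symm))
    have hgeq : pdbP k p.1.1 - pdbP k p.1.2 = pdbP k q.1.1 - pdbP k q.1.2 := by
      rw [← pdb_gid, ← pdb_gid]
      exact Finset.sum_congr rfl fun l hl => by rw [hd l hl]
    have hLeq : pdbL k p.1.1 p.1.2 = pdbL k q.1.1 q.1.2 := by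
      rw [pdbL, pdbL, hgeq]
    have hx : p.1.1 = q.1.1 := by
      funext i
      have h2i : (pdbL k p.1.1 p.1.2).idxOf (-(p.1.1 i)) =
          (pdbL k q.1.1 q.1.2).idxOf (-(q.1.1 i)) := congrArg Fin.val (congrFun h2 i)
      rw [← hLeq] at h2i
      have m1 : -(p.1.1 i) ∈ pdbL k p.1.1 p.1.2 :=
        hmemx p.1.1 p.1.2 p.2.2.2.2.1 p.2.2.2.2.2 i
      have m2 : -(q.1.1 i) ∈ pdbL k p.1.1 p.1.2 := by
        rw [hLeq]; exact hmemx q.1.1 q.1.2 q.2.2.2.2.1 q.2.2.2.2.2 i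
      exact neg_inj.mp ((List.idxOf_inj m1).mp h2i)
    have hy : p.1.2 = q.1.2 := by
      funext i
      have h3i : (pdbL k p.1.1 p.1.2).idxOf (-(p.1.2 i)) =
          (pdbL k q.1.1 q.1.2).idxOf (-(q.1.2 i)) := congrArg Fin.val (congrFun h3 i)
      rw [← hLeq] at h3i
      have m1 : -(p.1.2 i) ∈ pdbL k p.1.1 p.1.2 :=
        hmemy p.1.1 p.1.2 p.2.2.2.2.1 p.2.2.2.2.2 i
      have m2 : -(q.1.2 i) ∈ pdbL k p.1.1 p.1.2 := by
        rw [hLeq]; exact hmemy q.1.1 q.1.2 q.2.2.2.2.1 q.2.2.2.2.2 i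
      exact neg_inj.mp ((List.idxOf_inj m1).mp h3i)
    exact Subtype.ext (Prod.ext hx hy)
  · -- counting the codomain
    rw [Nat.card_eq_finsetCard]
    have hcardT : T.card = T1.card *
        (Fintype.card (Fin k → Fin k) * Fintype.card (Fin k → Fin k)) := by
      rw [hTdef, Finset.card_product, Finset.card_product]
      simp [Finset.card_univ]

    have hcardT1 : T1.card ≤ 2 ^ ((k + 3) * k) * N ^ (∑ l ∈ R, l) := by
      rw [hT1def, Fintype.card_piFinset]
      calc ∏ l : {l // l ∈ R}, (Finset.Icc (-(pdbB k N (l : ℕ))) (pdbB k N (l : ℕ))).card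
          ≤ ∏ l : {l // l ∈ R}, 2 ^ (k + 3) * N ^ (l : ℕ) :=
            Finset.prod_le_prod' fun l _ => pdb_card_Icc_le k N (l : ℕ) hN
        _ = (∏ _l : {l // l ∈ R}, 2 ^ (k + 3)) * ∏ l : {l // l ∈ R}, N ^ (l : ℕ) :=
            Finset.prod_mul_distrib
        _ = (2 ^ (k + 3)) ^ (Fintype.card {l // l ∈ R}) * N ^ (∑ l : {l // l ∈ R}, (l : ℕ)) := by
            rw [Finset.prod_const, Finset.card_univ, Finset.prod_pow_eq_pow_sum]
        _ = 2 ^ ((k + 3) * R.card) * N ^ (∑ l ∈ R, l) := by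
            rw [← pow_mul, Fintype.card_coe, Finset.sum_coe_sort R (fun l => l)]
        _ ≤ 2 ^ ((k + 3) * k) * N ^ (∑ l ∈ R, l) := by
            refine Nat.mul_le_mul_right _ (Nat.pow_le_pow_right (by norm_num) ?_)
            refine Nat.mul_le_mul_left _ ?_
            calc R.card ≤ (Finset.Icc 1 k).card := Finset.card_le_card Finset.sdiff_subset
              _ = k := by rw [Nat.card_Icc]; omega
    calc T.card = T1.card * (Fintype.card (Fin k → Fin k) * Fintype.card (Fin k → Fin k)) :=
          hcardT
      _ ≤ (2 ^ ((k + 3) * k) * N ^ (∑ l ∈ R, l)) *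
            (Fintype.card (Fin k → Fin k) * Fintype.card (Fin k → Fin k)) :=
          Nat.mul_le_mul_right _ hcardT1
      _ = 2 ^ ((k + 3) * k) * Fintype.card (Fin k → Fin k) * Fintype.card (Fin k → Fin k)
            * N ^ (∑ l ∈ R, l) := by ring

/-- The bound (2.10). With `φ_j(z) = a_j σ_{k_j}(z) − Σ_{l < k_j, l ∈ ℛ} b_{jl} σ_l(z)`,
the number `T_k^*(X;φ)` of pairs `(x,y)` with `1 ≤ x_i, y_i ≤ X` satisfying
`φ_j(x) = φ_j(y)` for all `j`, with `{x_1,…,x_k} = {y_1,…,y_k}` as sets but `y` not a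
permutation of `x`, satisfies `T_k^*(X;φ) ≪ X^{w(φ)+ε}`. -/
theorem potentially_diagonal_bound (k r : ℕ) (hr : 0 < r) (kk : Fin r → ℕ)
    (hmono : StrictMono kk) (hfirst : 1 ≤ kk ⟨0, hr⟩)
    (hlast : kk ⟨r - 1, Nat.sub_lt hr Nat.one_pos⟩ = k)
    (a : Fin r → ℤ) (ha : ∀ j, a j ≠ 0) (b : Fin r → ℕ → ℤ)
    (φ : Fin r → (Fin k → ℤ) → ℤ)
    (hφ : ∀ j z, φ j z =
      a j * esymm k (kk j) z
        - ∑ l ∈ (compSet k r kk).filter (fun l => l < kk j), b j l * esymm k l z)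
    (ε : ℝ) (hε : 0 < ε) :
    (fun X : ℕ =>
        (pairCount k X (fun x y => (∀ j, φ j x = φ j y) ∧ Set.range x = Set.range y ∧
          ¬ ∃ π : Equiv.Perm (Fin k), y = x ∘ π) : ℝ))
      =O[atTop]
      fun X : ℕ => (X : ℝ) ^ ((k * (k + 1) : ℝ) / 2 - (∑ j, (kk j : ℝ)) + ε) := by
  classical
  -- `k ≥ 1`
  have hbounds : ∀ j : Fin r, 1 ≤ kk j ∧ kk j ≤ k := by
    intro j
    constructor
    · exact hfirst.trans (hmono.monotone (by exact Fin.mk_le_of_le_val (Nat.zero_le _)))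
    · rw [← hlast]
      exact hmono.monotone (by
        have := j.2
        exact Fin.le_def.mpr (by simp; omega))
  have hk : 0 < k := lt_of_lt_of_le Nat.one_pos ((hbounds ⟨0, hr⟩).1.trans (hbounds ⟨0, hr⟩).2)
  -- the exponent identity
  have himg : Finset.image kk Finset.univ ⊆ Finset.Icc 1 k := by
    intro l hl
    obtain ⟨j, _, hj⟩ := Finset.mem_image.mp hl
    subst hj
    exact Finset.mem_Icc.mpr (hbounds j)
  have hsd : (∑ l ∈ compSet k r kk, l) + (∑ l ∈ Finset.image kk Finset.univ, l) =
      ∑ l ∈ Finset.Icc 1 k, l := Finset.sum_sdiff himg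
  have himgsum : ∑ l ∈ Finset.image kk Finset.univ, l = ∑ j, kk j :=
    Finset.sum_image (fun i _ j _ h => hmono.injective h)
  have hIccsum : (∑ l ∈ Finset.Icc 1 k, l) * 2 = k * (k + 1) := by
    have h := Finset.sum_range_id_mul_two (k + 1)
    rw [pdb_range_split k, Finset.sum_insert (by simp)] at h
    simpa [Nat.mul_comm] using h
  set w : ℕ := ∑ l ∈ compSet k r kk, l with hw
  have hwreal : (w : ℝ) = (k * (k + 1) : ℝ) / 2 - (∑ j, (kk j : ℝ)) := by
    have h0 : w + (∑ j, kk j) = ∑ l ∈ Finset.Icc 1 k, l := by rw [← himgsum]; exact hsd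
    have h1 := congrArg (Nat.cast : ℕ → ℝ) h0
    have h2 := congrArg (Nat.cast : ℕ → ℝ) hIccsum
    push_cast at h1 h2
    linarith
  -- constant for the big-O bound
  set CC : ℕ := 2 ^ ((k + 3) * k) * Fintype.card (Fin k → Fin k) * Fintype.card (Fin k → Fin k)
    with hCC
  rw [Asymptotics.isBigO_iff]
  refine ⟨(CC : ℝ), ?_⟩
  filter_upwards [Filter.eventually_ge_atTop 1] with X hX
  have hXR : (1 : ℝ) ≤ (X : ℝ) := by exact_mod_cast hX
  have hXnn : (0 : ℝ) ≤ (X : ℝ) := by positivity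
  have hcount := pdb_main k r X hk hX kk a ha b φ hφ
  rw [Real.norm_natCast]
  rw [Real.norm_of_nonneg (Real.rpow_nonneg hXnn _)]
  calc (pairCount k X (fun x y => (∀ j, φ j x = φ j y) ∧ Set.range x = Set.range y ∧
          ¬ ∃ π : Equiv.Perm (Fin k), y = x ∘ π) : ℝ)
      ≤ ((CC * X ^ w : ℕ) : ℝ) := by exact_mod_cast hcount
    _ = (CC : ℝ) * (X : ℝ) ^ (w : ℕ) := by push_cast; ring
    _ = (CC : ℝ) * (X : ℝ) ^ ((w : ℕ) : ℝ) := by rw [Real.rpow_natCast]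
    _ ≤ (CC : ℝ) * (X : ℝ) ^ ((k * (k + 1) : ℝ) / 2 - (∑ j, (kk j : ℝ)) + ε) := by
        refine mul_le_mul_of_nonneg_left ?_ (by positivity)
        refine Real.rpow_le_rpow_of_exponent_le hXR ?_
        rw [hwreal]
        linarith
end

section
/- Let φ_1,…,φ_r be symmetric polynomials of the shape φ_j(z) = a_j σ_{k_j}(z) − Υ_j(σ_{l_1}(z),…,σ_{l_R}(z)) with a_j nonzero integers and Υ_j ∈ ℤ[s_1,…,s_R]. Suppose x, y ∈ ℤ^k satisfy φ_j(x) = φ_j(y) for 1 ≤ j ≤ r, and set h = (σ_{l_1}(x),…,σ_{l_R}(x)) and g = (σ_{l_1}(y),…,σ_{l_R}(y)). Then one has the polynomial identity in t: A·(∏_{i=1}^k (t + x_i) − ∏_{i=1}^k (t + y_i)) = Ψ(t;h) − Ψ(t;g). -/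
open Finset Asymptotics Filter

/-- The auxiliary polynomial `Ψ(t; e) = A Σ_{m} e_m t^{k−l_m} + Σ_j c_j t^{k−k_j} Υ_j(e)`,
where `A = a_1 ⋯ a_r` and `c_j = A / a_j`. -/
noncomputable def PsiN (k r : ℕ) (kk : Fin r → ℕ) (a : Fin r → ℤ)
    (Υ : Fin r → MvPolynomial {l // l ∈ compSet k r kk} ℤ)
    (e : {l // l ∈ compSet k r kk} → ℤ) (t : ℤ) : ℤ :=
  (∏ j, a j) * (∑ l : {l // l ∈ compSet k r kk}, e l * t ^ (k - l.1)) +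
    ∑ j, (∏ i ∈ Finset.univ.erase j, a i) * t ^ (k - kk j) * MvPolynomial.eval e (Υ j)

lemma prod_expand (k : ℕ) (x : Fin k → ℤ) (t : ℤ) :
    ∏ i, (t + x i) = ∑ l ∈ Finset.range (k+1), esymm k l x * t ^ (k - l) := by
  have : ∏ i, (t + x i) = ∏ i, (x i + t) := by simp [add_comm]
  rw [this, Finset.prod_add]
  rw [show (Finset.univ : Finset (Fin k)).powerset =
      (range ((Finset.univ : Finset (Fin k)).card + 1)).disjiUnion
        (fun i => powersetCard i Finset.univ)
        (show Set.PairwiseDisjoint _ (fun i => powersetCard i (Finset.univ : Finset (Fin k))) from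
          (Finset.univ : Finset (Fin k)).pairwise_disjoint_powersetCard.set_pairwise _)
    from Finset.powerset_card_disjiUnion _]
  rw [Finset.sum_disjiUnion]
  simp only [Finset.card_univ, Fintype.card_fin]
  refine Finset.sum_congr rfl fun l hl => ?_
  rw [esymm, Finset.sum_mul]
  refine Finset.sum_congr rfl fun s hs => ?_
  obtain ⟨hsub, hcard⟩ := Finset.mem_powersetCard.mp hs
  rw [Finset.prod_const, Finset.card_sdiff_of_subset hsub, Finset.card_univ, Fintype.card_fin, hcard]

/-- The identity (3.4). If `x, y ∈ ℤ^k` satisfy `φ_j(x) = φ_j(y)` for `1 ≤ j ≤ r`, where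
`φ_j(z) = a_j σ_{k_j}(z) − Υ_j(σ_{l_1}(z),…,σ_{l_R}(z))`, and
`h = (σ_{l_1}(x),…,σ_{l_R}(x))`, `g = (σ_{l_1}(y),…,σ_{l_R}(y))`, then
`A (∏_{i=1}^k (t + x_i) − ∏_{i=1}^k (t + y_i)) = Ψ(t;h) − Ψ(t;g)` identically in `t`. -/
theorem multiplicative_relation_nonlinear (k r : ℕ) (hr : 0 < r) (kk : Fin r → ℕ)
    (hmono : StrictMono kk) (hfirst : 1 ≤ kk ⟨0, hr⟩)
    (hlast : kk ⟨r - 1, Nat.sub_lt hr Nat.one_pos⟩ = k)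
    (a : Fin r → ℤ) (ha : ∀ j, a j ≠ 0)
    (Υ : Fin r → MvPolynomial {l // l ∈ compSet k r kk} ℤ)
    (x y : Fin k → ℤ)
    (heq : ∀ j,
      a j * esymm k (kk j) x - MvPolynomial.eval (fun l => esymm k l.1 x) (Υ j) =
        a j * esymm k (kk j) y - MvPolynomial.eval (fun l => esymm k l.1 y) (Υ j))
    (h g : {l // l ∈ compSet k r kk} → ℤ)
    (hh : ∀ l, h l = esymm k l.1 x) (hg : ∀ l, g l = esymm k l.1 y) :
    ∀ t : ℤ,
      (∏ j, a j) * ((∏ i, (t + x i)) - ∏ i, (t + y i)) =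
        PsiN k r kk a Υ h t - PsiN k r kk a Υ g t := by
  intro t
  have hhf : (fun l : {l // l ∈ compSet k r kk} => esymm k l.1 x) = h :=
    funext fun l => (hh l).symm
  have hgf : (fun l : {l // l ∈ compSet k r kk} => esymm k l.1 y) = g :=
    funext fun l => (hg l).symm
  have key : ∀ j, a j * (esymm k (kk j) x - esymm k (kk j) y) =
      MvPolynomial.eval h (Υ j) - MvPolynomial.eval g (Υ j) := by
    intro j
    have := heq j
    rw [hhf, hgf] at this
    linarith
  have himg : Finset.image kk Finset.univ ⊆ Finset.Icc 1 k := by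
    intro l hl
    obtain ⟨j, -, rfl⟩ := Finset.mem_image.mp hl
    refine Finset.mem_Icc.mpr ⟨hfirst.trans (hmono.monotone ?_), ?_⟩
    · exact Fin.mk_le_of_le_val (Nat.zero_le _)
    · rw [← hlast]
      exact hmono.monotone (by simp [Fin.le_def]; omega)
  -- expand LHS
  have L : (∏ j, a j) * ((∏ i, (t + x i)) - ∏ i, (t + y i)) =
      ∑ l ∈ Finset.range (k+1),
        (∏ j, a j) * ((esymm k l x - esymm k l y) * t ^ (k - l)) := by
    rw [prod_expand, prod_expand, ← Finset.sum_sub_distrib, Finset.mul_sum]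
    exact Finset.sum_congr rfl fun l _ => by ring
  have hrange : Finset.range (k+1) = insert 0 (Finset.Icc 1 k) := by
    ext n; simp [Finset.mem_insert]; omega
  rw [L, hrange, Finset.sum_insert (by simp)]
  have he0 : esymm k 0 x - esymm k 0 y = 0 := by simp [esymm]
  rw [show (∏ j, a j) * ((esymm k 0 x - esymm k 0 y) * t ^ (k - 0)) = 0 by rw [he0]; ring,
    zero_add]
  rw [← Finset.sum_sdiff himg]
  -- the image part
  have himgsum : ∑ l ∈ Finset.image kk Finset.univ,
      (∏ j, a j) * ((esymm k l x - esymm k l y) * t ^ (k - l)) =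
      ∑ j, (∏ i ∈ Finset.univ.erase j, a i) * t ^ (k - kk j) *
        (MvPolynomial.eval h (Υ j) - MvPolynomial.eval g (Υ j)) := by
    rw [Finset.sum_image (fun i _ j _ hij => hmono.injective hij)]
    refine Finset.sum_congr rfl fun j _ => ?_
    rw [← Finset.prod_erase_mul Finset.univ a (Finset.mem_univ j), ← key j]
    ring
  have conv : ∑ l : {l // l ∈ compSet k r kk}, (h l * t ^ (k - l.1) - g l * t ^ (k - l.1)) =
      ∑ l ∈ Finset.Icc 1 k \ Finset.image kk Finset.univ,
        (esymm k l x * t ^ (k - l) - esymm k l y * t ^ (k - l)) := by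
    rw [show (∑ l : {l // l ∈ compSet k r kk}, (h l * t ^ (k - l.1) - g l * t ^ (k - l.1))) =
        ∑ l : {l // l ∈ compSet k r kk},
          (fun n => esymm k n x * t ^ (k - n) - esymm k n y * t ^ (k - n)) l.1 from
      Finset.sum_congr rfl fun l _ => by rw [hh l, hg l]]
    exact Finset.sum_coe_sort (s := compSet k r kk)
      (f := fun n => esymm k n x * t ^ (k - n) - esymm k n y * t ^ (k - n))
  have e1 : ∑ l ∈ Finset.Icc 1 k \ Finset.image kk Finset.univ,
      (∏ j, a j) * ((esymm k l x - esymm k l y) * t ^ (k - l)) =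
      (∏ j, a j) * (∑ l : {l // l ∈ compSet k r kk}, h l * t ^ (k - l.1)) -
        (∏ j, a j) * (∑ l : {l // l ∈ compSet k r kk}, g l * t ^ (k - l.1)) := by
    rw [← mul_sub, ← Finset.sum_sub_distrib, conv, Finset.mul_sum]
    exact Finset.sum_congr rfl fun l _ => by ring
  have e2 : ∑ j, (∏ i ∈ Finset.univ.erase j, a i) * t ^ (k - kk j) *
      (MvPolynomial.eval h (Υ j) - MvPolynomial.eval g (Υ j)) =
      (∑ j, (∏ i ∈ Finset.univ.erase j, a i) * t ^ (k - kk j) * MvPolynomial.eval h (Υ j)) -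
        ∑ j, (∏ i ∈ Finset.univ.erase j, a i) * t ^ (k - kk j) * MvPolynomial.eval g (Υ j) := by
    rw [← Finset.sum_sub_distrib]
    exact Finset.sum_congr rfl fun j _ => by ring
  rw [himgsum, e1, e2, PsiN, PsiN]
  ring
end

section
/- Let φ_1,…,φ_r be symmetric polynomials of the shape φ_j(z) = a_j σ_{k_j}(z) − Υ_j(σ_{l_1}(z),…,σ_{l_R}(z)) with a_j nonzero integers and Υ_j ∈ ℤ[s_1,…,s_R]. Suppose x, y ∈ ℤ^k satisfy φ_j(x) = φ_j(y) for 1 ≤ j ≤ r, and set h = (σ_{l_1}(x),…,σ_{l_R}(x)) and g = (σ_{l_1}(y),…,σ_{l_R}(y)). Then for each index j with 1 ≤ j ≤ k one has A·∏_{i=1}^k (x_i − y_j) = Ψ(−y_j;h) − Ψ(−y_j;g). -/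
open Finset Asymptotics Filter

lemma esymm_eq_multiset (k l : ℕ) (x : Fin k → ℤ) :
    (Multiset.map x (Finset.univ : Finset (Fin k)).val).esymm l = esymm k l x := by
  rw [Finset.esymm_map_val]; rfl

lemma prod_add_eq (k : ℕ) (x : Fin k → ℤ) (t : ℤ) :
    ∏ i, (t + x i) = ∑ l ∈ Finset.range (k + 1), esymm k l x * t ^ (k - l) := by
  have hcard : Multiset.card (Multiset.map x (Finset.univ : Finset (Fin k)).val) = k := by
    simp
  have h1 := congrArg (Polynomial.eval t)
    (Multiset.prod_X_add_C_eq_sum_esymm (Multiset.map x (Finset.univ : Finset (Fin k)).val))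
  rw [hcard, Polynomial.eval_multiset_prod, Multiset.map_map, Polynomial.eval_finset_sum] at h1
  simp only [Function.comp, Polynomial.eval_add, Polynomial.eval_X, Polynomial.eval_C,
    Polynomial.eval_mul, Polynomial.eval_pow, esymm_eq_multiset] at h1
  rw [Multiset.map_map] at h1
  rw [Finset.prod_eq_multiset_prod]
  exact h1

/-- The relation (3.5). If `x, y ∈ ℤ^k` satisfy `φ_j(x) = φ_j(y)` for `1 ≤ j ≤ r`, where
`φ_j(z) = a_j σ_{k_j}(z) − Υ_j(σ_{l_1}(z),…,σ_{l_R}(z))`, and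
`h = (σ_{l_1}(x),…,σ_{l_R}(x))`, `g = (σ_{l_1}(y),…,σ_{l_R}(y))`, then for each
`1 ≤ j ≤ k` one has `A ∏_{i=1}^k (x_i − y_j) = Ψ(−y_j;h) − Ψ(−y_j;g)`. -/
theorem multiplicative_relation_nonlinear_evaluated (k r : ℕ) (hr : 0 < r)
    (kk : Fin r → ℕ)
    (hmono : StrictMono kk) (hfirst : 1 ≤ kk ⟨0, hr⟩)
    (hlast : kk ⟨r - 1, Nat.sub_lt hr Nat.one_pos⟩ = k)
    (a : Fin r → ℤ) (ha : ∀ j, a j ≠ 0)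
    (Υ : Fin r → MvPolynomial {l // l ∈ compSet k r kk} ℤ)
    (x y : Fin k → ℤ)
    (heq : ∀ j,
      a j * esymm k (kk j) x - MvPolynomial.eval (fun l => esymm k l.1 x) (Υ j) =
        a j * esymm k (kk j) y - MvPolynomial.eval (fun l => esymm k l.1 y) (Υ j))
    (h g : {l // l ∈ compSet k r kk} → ℤ)
    (hh : ∀ l, h l = esymm k l.1 x) (hg : ∀ l, g l = esymm k l.1 y) :
    ∀ j : Fin k,
      (∏ i, a i) * (∏ i, (x i - y j)) =
        PsiN k r kk a Υ h (-(y j)) - PsiN k r kk a Υ g (-(y j)) := by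
  intro j
  set t : ℤ := -(y j) with ht
  have hinj : Function.Injective kk := hmono.injective
  set δ : ℕ → ℤ := fun l => esymm k l x - esymm k l y with hδ
  have hxy : (∏ i, (x i - y j)) = ∑ l ∈ Finset.range (k + 1), δ l * t ^ (k - l) := by
    have h0 : (∏ i, (t + y i)) = 0 :=
      Finset.prod_eq_zero (Finset.mem_univ j) (by simp [ht])
    have h1 : (∏ i, (x i - y j)) = ∏ i, (t + x i) :=
      Finset.prod_congr rfl fun i _ => by rw [ht]; ring
    rw [h1, ← sub_zero (∏ i, (t + x i)), ← h0, prod_add_eq, prod_add_eq,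
      ← Finset.sum_sub_distrib]
    exact Finset.sum_congr rfl fun l _ => by simp only [hδ]; ring
  have hzero : δ 0 = 0 := by simp [hδ, esymm]
  have hsub : Finset.image kk Finset.univ ⊆ Finset.Icc 1 k := by
    intro m hm
    obtain ⟨j', -, rfl⟩ := Finset.mem_image.mp hm
    refine Finset.mem_Icc.mpr ⟨le_trans hfirst (hmono.monotone (Fin.le_def.mpr (Nat.zero_le _))), ?_⟩
    rw [← hlast]
    have := j'.isLt
    refine hmono.monotone (Fin.le_def.mpr ?_)
    show j'.val ≤ r - 1
    omega
  have hrange : Finset.range (k + 1) = insert 0 (Finset.Icc 1 k) := by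
    ext m; simp only [Finset.mem_range, Finset.mem_insert, Finset.mem_Icc]; omega
  have hicc : Finset.Icc 1 k = compSet k r kk ∪ Finset.image kk Finset.univ :=
    (Finset.sdiff_union_of_subset hsub).symm
  have hsplit : ∑ l ∈ Finset.range (k + 1), δ l * t ^ (k - l)
      = (∑ l ∈ compSet k r kk, δ l * t ^ (k - l))
        + ∑ j' : Fin r, δ (kk j') * t ^ (k - kk j') := by
    rw [hrange, Finset.sum_insert (by simp), hzero, zero_mul, zero_add, hicc,
      Finset.sum_union (show Disjoint (compSet k r kk) (Finset.image kk Finset.univ)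
        from Finset.sdiff_disjoint),
      Finset.sum_image (fun i _ i' _ hi => hinj hi)]
  have hhfun : h = fun l => esymm k l.1 x := funext hh
  have hgfun : g = fun l => esymm k l.1 y := funext hg
  have heval : ∀ j' : Fin r, MvPolynomial.eval h (Υ j') - MvPolynomial.eval g (Υ j')
      = a j' * δ (kk j') := by
    intro j'
    rw [hhfun, hgfun]
    simp only [hδ]
    linarith [heq j']
  have hPsi : PsiN k r kk a Υ h t - PsiN k r kk a Υ g t
      = (∏ i, a i) * ((∑ l ∈ compSet k r kk, δ l * t ^ (k - l))
          + ∑ j' : Fin r, δ (kk j') * t ^ (k - kk j')) := by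
    simp only [PsiN]
    have e1 : (∑ l : {l // l ∈ compSet k r kk}, h l * t ^ (k - l.1))
        - ∑ l : {l // l ∈ compSet k r kk}, g l * t ^ (k - l.1)
        = ∑ l ∈ compSet k r kk, δ l * t ^ (k - l) := by
      rw [← Finset.sum_sub_distrib,
        ← Finset.sum_coe_sort (compSet k r kk) (fun l => δ l * t ^ (k - l))]
      exact Finset.sum_congr rfl fun l _ => by rw [hh, hg]; simp only [hδ]; ring
    have e2 : (∑ j' : Fin r, (∏ i ∈ Finset.univ.erase j', a i) * t ^ (k - kk j')
            * MvPolynomial.eval h (Υ j'))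
        - ∑ j' : Fin r, (∏ i ∈ Finset.univ.erase j', a i) * t ^ (k - kk j')
            * MvPolynomial.eval g (Υ j')
        = (∏ i, a i) * ∑ j' : Fin r, δ (kk j') * t ^ (k - kk j') := by
      rw [← Finset.sum_sub_distrib, Finset.mul_sum]
      refine Finset.sum_congr rfl fun j' _ => ?_
      rw [← mul_sub, heval j', ← Finset.mul_prod_erase Finset.univ a (Finset.mem_univ j')]
      ring
    linear_combination (∏ i, a i) * e1 + e2
  rw [hxy, hsplit]
  exact hPsi.symm
end
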